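/- arXiv:1012.0412 — 8 statements merged into one kernel-verified Lean document; each statement's English description precedes it below -/
import Mathlib

section
/- For all p in (0,1/2) ∪ (1/2,1), e^{2H[B(2,p)]} < e^{2H[B(1,p)]} + e^{2H[B(1,p)]}, i.e. the discrete entropy power inequality fails for two copies of B(1,p) when p ≠ 1/2. -/
open Real

noncomputable def binEnt (p : ℝ) : ℝ := -(p * Real.log p) - (1 - p) * Real.log (1 - p)

noncomputable def binomPmf (n : ℕ) (p : ℝ) (k : ℕ) : ℝ :=
  (n.choose k : ℝ) * p ^ k * (1 - p) ^ (n - k)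

noncomputable def binomEnt (n : ℕ) (p : ℝ) : ℝ :=
  -∑ k ∈ Finset.range (n + 1), binomPmf n p k * Real.log (binomPmf n p k)

noncomputable def gfun (p : ℝ) : ℝ :=
  Real.log 2 * (1/2 + 2*p*(1-p)) + p * Real.log p + (1-p) * Real.log (1-p)

noncomputable def gfun' (p : ℝ) : ℝ :=
  Real.log 2 * (2 - 4*p) + Real.log p - Real.log (1-p)

lemma gfun_hasDeriv {x : ℝ} (hx : x ∈ Set.Ioo (0:ℝ) 1) : HasDerivAt gfun (gfun' x) x := by
  obtain ⟨h0, h1⟩ := hx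
  have hx0 : x ≠ 0 := ne_of_gt h0
  have h1x : (1:ℝ) - x ≠ 0 := by intro h; linarith [sub_eq_zero.mp h]
  have hA : HasDerivAt (fun p : ℝ => p * Real.log p) (Real.log x + 1) x := by
    have := (hasDerivAt_id x).mul (Real.hasDerivAt_log hx0)
    refine this.congr_deriv ?_
    field_simp
    rw [id_eq]; ring
  have hsub : HasDerivAt (fun p : ℝ => 1 - p) (-1 : ℝ) x := by
    exact (hasDerivAt_id x).const_sub 1
  have hB : HasDerivAt (fun p : ℝ => (1-p) * Real.log (1-p))
      (-(Real.log (1-x)) - 1) x := by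
    have hlog : HasDerivAt (fun p : ℝ => Real.log (1-p)) (-(1-x)⁻¹) x := by
      have := (Real.hasDerivAt_log h1x).comp x hsub
      refine this.congr_deriv ?_
      ring
    have := hsub.mul hlog
    refine this.congr_deriv ?_
    field_simp
    ring
  have hC : HasDerivAt (fun p : ℝ => Real.log 2 * (1/2 + 2*p*(1-p)))
      (Real.log 2 * (2 - 4*x)) x := by
    have hpoly : HasDerivAt (fun p : ℝ => 1/2 + 2*p*(1-p)) (2 - 4*x) x := by
      have h := (hasDerivAt_const x ((1:ℝ)/2)).add
        (((hasDerivAt_id x).const_mul 2).mul hsub)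
      refine h.congr_deriv ?_
      simp only [id_eq]
      ring
    exact hpoly.const_mul _
  have := (hC.add hA).add hB
  refine this.congr_deriv ?_
  unfold gfun'
  ring

lemma gfun_strictConvex : StrictConvexOn ℝ (Set.Ioo (0:ℝ) 1) gfun := by
  apply strictConvexOn_of_deriv2_pos (convex_Ioo 0 1)
  · intro x hx
    exact (gfun_hasDeriv hx).differentiableAt.continuousAt.continuousWithinAt
  · intro x hx
    rw [interior_Ioo] at hx
    obtain ⟨h0, h1⟩ := hx
    have hx0 : x ≠ 0 := ne_of_gt h0
    have h1x : (0:ℝ) < 1 - x := by linarith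
    have hev : deriv gfun =ᶠ[nhds x] gfun' := by
      filter_upwards [isOpen_Ioo.mem_nhds ⟨h0, h1⟩] with y hy
      exact (gfun_hasDeriv hy).deriv
    have hD' : HasDerivAt gfun' (Real.log 2 * (-4) + (x⁻¹ + (1-x)⁻¹)) x := by
      have hsub : HasDerivAt (fun p : ℝ => 1 - p) (-1 : ℝ) x := by
        exact (hasDerivAt_id x).const_sub 1
      have hlog : HasDerivAt (fun p : ℝ => Real.log (1-p)) (-(1-x)⁻¹) x := by
        have := (Real.hasDerivAt_log h1x.ne').comp x hsub
        refine this.congr_deriv ?_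
        ring
      have h1 : HasDerivAt (fun p : ℝ => Real.log 2 * (2 - 4*p)) (Real.log 2 * (-4)) x := by
        have : HasDerivAt (fun p : ℝ => 2 - 4*p) (-4 : ℝ) x := by
          exact ((hasDerivAt_id x).const_mul 4).const_sub 2 |>.congr_deriv (by ring)
        simpa using this.const_mul (Real.log 2)
      have := (h1.add (Real.hasDerivAt_log hx0)).sub hlog
      refine this.congr_deriv ?_
      ring
    have h2 : deriv^[2] gfun x = Real.log 2 * (-4) + (x⁻¹ + (1-x)⁻¹) := by
      show deriv (deriv gfun) x = _
      rw [hev.deriv_eq]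
      exact hD'.deriv
    rw [h2]
    have hlog2 : Real.log 2 < 1 := by
      have := Real.log_two_lt_d9
      linarith
    have hx1x : x * (1 - x) ≤ 1/4 := by nlinarith [sq_nonneg (x - 1/2)]
    have hpos : (0:ℝ) < x * (1 - x) := mul_pos h0 h1x
    have h4 : (4:ℝ) ≤ x⁻¹ + (1-x)⁻¹ := by
      rw [inv_add_inv hx0 h1x.ne']
      rw [le_div_iff₀ hpos]
      nlinarith
    nlinarith

lemma binEnt_lt (p : ℝ) (hp : p ∈ Set.Ioo (0:ℝ) 1) (hne : p ≠ 1/2) :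
    binEnt p < Real.log 2 * (1/2 + 2*p*(1-p)) := by
  have hsymm : gfun (1 - p) = gfun p := by
    unfold gfun
    have : 1 - (1 - p) = p := by ring
    rw [this]
    ring
  have hmem : (1 - p) ∈ Set.Ioo (0:ℝ) 1 := ⟨by linarith [hp.2], by linarith [hp.1]⟩
  have hneq : p ≠ 1 - p := fun h => hne (by linarith [h])
  have := gfun_strictConvex.2 hp hmem hneq (by norm_num : (0:ℝ) < 1/2)
    (by norm_num : (0:ℝ) < 1/2) (by norm_num)
  rw [hsymm] at this
  have hmid : (1/2 : ℝ) • p + (1/2 : ℝ) • (1 - p) = 1/2 := by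
    simp only [smul_eq_mul]; ring
  rw [hmid] at this
  have hg12 : gfun (1/2) = 0 := by
    unfold gfun
    have : Real.log (1 - 1/2 : ℝ) = Real.log (1/2) := by norm_num
    rw [this]
    rw [show ((1:ℝ)/2) = 2⁻¹ by norm_num, Real.log_inv]
    ring
  rw [hg12] at this
  have hgp : 0 < gfun p := by
    simp only [smul_eq_mul] at this
    linarith
  unfold gfun at hgp
  unfold binEnt
  linarith

lemma binomEnt_one (p : ℝ) : binomEnt 1 p = binEnt p := by
  unfold binomEnt binomPmf binEnt
  rw [Finset.sum_range_succ, Finset.sum_range_succ, Finset.sum_range_zero]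
  norm_num
  ring

lemma binomEnt_two (p : ℝ) (hp : p ∈ Set.Ioo (0:ℝ) 1) :
    binomEnt 2 p = 2 * binEnt p - 2*p*(1-p) * Real.log 2 := by
  obtain ⟨h0, h1⟩ := hp
  have hx0 : p ≠ 0 := ne_of_gt h0
  have h1x : (1:ℝ) - p ≠ 0 := by intro h; linarith [sub_eq_zero.mp h]
  unfold binomEnt binomPmf binEnt
  rw [Finset.sum_range_succ, Finset.sum_range_succ, Finset.sum_range_succ,
    Finset.sum_range_zero]
  norm_num
  rw [show (2:ℝ) * p * (1 - p) = 2 * (p * (1-p)) by ring,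
    Real.log_mul (by norm_num) (mul_ne_zero hx0 h1x),
    Real.log_mul hx0 h1x]
  push_cast
  ring

theorem epi_fails_binom_two (p : ℝ) (hp : p ∈ Set.Ioo (0:ℝ) 1) (hne : p ≠ 1/2) :
    Real.exp (2 * binomEnt 2 p) <
      Real.exp (2 * binomEnt 1 p) + Real.exp (2 * binomEnt 1 p) := by
  have key := binEnt_lt p hp hne
  rw [binomEnt_one, binomEnt_two p hp]
  have hlt : 2 * (2 * binEnt p - 2*p*(1-p) * Real.log 2) < Real.log 2 + 2 * binEnt p := by
    nlinarith
  calc Real.exp (2 * (2 * binEnt p - 2*p*(1-p) * Real.log 2))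
      < Real.exp (Real.log 2 + 2 * binEnt p) := Real.exp_lt_exp.mpr hlt
    _ = 2 * Real.exp (2 * binEnt p) := by
        rw [Real.exp_add, Real.exp_log (by norm_num)]
    _ = Real.exp (2 * binEnt p) + Real.exp (2 * binEnt p) := by ring
end

section
/- For p in (0,1/2) ∪ (1/2,1), H[B(2,p)] − H[B(1,p)] − (1/2)·log 2 ≤ 2(p − 1/2)²·(log 2 − 1) < 0. -/
open Real

section Aux
open Set

noncomputable def Fent (y : ℝ) : ℝ :=
  y * Real.log y + (1 - y) * Real.log (1 - y) + Real.log 2 - 2 * (y - 1/2)^2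

noncomputable def Gent (y : ℝ) : ℝ := Real.log y - Real.log (1 - y) - 4 * y + 2

lemma Gent_hasDeriv {x : ℝ} (hx : x ∈ Ioo (0:ℝ) 1) :
    HasDerivAt Gent (1/x + 1/(1-x) - 4) x := by
  obtain ⟨h0, h1⟩ := hx
  have h1x : (0:ℝ) < 1 - x := by linarith
  have d1 : HasDerivAt Real.log x⁻¹ x := Real.hasDerivAt_log (ne_of_gt h0)
  have dsub : HasDerivAt (fun y : ℝ => 1 - y) (-1) x := by
    simpa using (hasDerivAt_id x).const_sub 1
  have d2 : HasDerivAt (fun y => Real.log (1 - y)) ((1-x)⁻¹ * (-1)) x :=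
    (Real.hasDerivAt_log (ne_of_gt h1x)).comp x dsub
  have d3 : HasDerivAt (fun y : ℝ => 4 * y) 4 x := by
    simpa using (hasDerivAt_id x).const_mul 4
  have := ((d1.sub d2).sub d3).add_const 2
  refine this.congr_deriv ?_
  ring

lemma Fent_hasDeriv {x : ℝ} (hx : x ∈ Ioo (0:ℝ) 1) :
    HasDerivAt Fent (Gent x) x := by
  obtain ⟨h0, h1⟩ := hx
  have h1x : (0:ℝ) < 1 - x := by linarith
  have d1 : HasDerivAt (fun y : ℝ => y * Real.log y) (Real.log x + 1) x :=
    Real.hasDerivAt_mul_log (ne_of_gt h0)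
  have dsub : HasDerivAt (fun y : ℝ => 1 - y) (-1) x := by
    simpa using (hasDerivAt_id x).const_sub 1
  have d2 : HasDerivAt (fun y : ℝ => (1 - y) * Real.log (1 - y))
      ((Real.log (1-x) + 1) * (-1)) x :=
    (Real.hasDerivAt_mul_log (ne_of_gt h1x)).comp x dsub
  have d3 : HasDerivAt (fun y : ℝ => 2 * (y - 1/2)^2) (2 * (2 * (x - 1/2))) x := by
    have : HasDerivAt (fun y : ℝ => (y - 1/2)^2) (2 * (x - 1/2)) x := by
      exact (((hasDerivAt_id x).sub_const (1/2)).pow 2).congr_deriv (by simp)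
    simpa using this.const_mul 2
  have := (((d1.add d2).add_const (Real.log 2)).sub d3)
  refine this.congr_deriv ?_
  unfold Gent; ring

lemma Gent_mono : MonotoneOn Gent (Ioo (0:ℝ) 1) := by
  have hdiff : ∀ x ∈ interior (Ioo (0:ℝ) 1), HasDerivAt Gent (1/x + 1/(1-x) - 4) x := by
    intro x hx; exact Gent_hasDeriv (by simpa using hx)
  apply monotoneOn_of_deriv_nonneg (convex_Ioo 0 1)
  · exact fun x hx => (Gent_hasDeriv hx).continuousAt.continuousWithinAt
  · intro x hx; exact (hdiff x hx).differentiableAt.differentiableWithinAt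
  · intro x hx
    rw [(hdiff x hx).deriv]
    rw [interior_Ioo] at hx
    obtain ⟨h0, h1⟩ := hx
    have h1x : (0:ℝ) < 1 - x := by linarith
    have key : 1/x + 1/(1-x) - 4 = (2*x - 1)^2 / (x * (1-x)) := by
      field_simp; ring
    rw [key]; positivity

lemma Fent_nonneg {x : ℝ} (hx : x ∈ Ioo (0:ℝ) 1) : 0 ≤ Fent x := by
  have Ghalf : Gent (1/2) = 0 := by
    unfold Gent; norm_num
  have Fhalf : Fent (1/2) = 0 := by
    unfold Fent
    rw [show (1:ℝ) - 1/2 = 1/2 by norm_num, show (1:ℝ)/2 = 2⁻¹ by norm_num, Real.log_inv]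
    ring
  obtain ⟨h0, h1⟩ := hx
  rcases le_or_gt x (1/2) with hle | hlt
  · -- antitone on Ioc 0 (1/2)
    have hanti : AntitoneOn Fent (Ioc (0:ℝ) (1/2)) := by
      apply antitoneOn_of_deriv_nonpos (convex_Ioc 0 (1/2))
      · intro y hy
        exact (Fent_hasDeriv ⟨hy.1, by linarith [hy.2]⟩).continuousAt.continuousWithinAt
      · intro y hy
        rw [interior_Ioc] at hy
        exact (Fent_hasDeriv ⟨hy.1, by linarith [hy.2]⟩).differentiableAt.differentiableWithinAt
      · intro y hy
        rw [interior_Ioc] at hy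
        have hy' : y ∈ Ioo (0:ℝ) 1 := ⟨hy.1, by linarith [hy.2]⟩
        rw [(Fent_hasDeriv hy').deriv]
        have := Gent_mono hy' (⟨by norm_num, by norm_num⟩ : (1/2:ℝ) ∈ Ioo (0:ℝ) 1) (le_of_lt hy.2)
        linarith [Ghalf ▸ this]
    have := hanti ⟨h0, hle⟩ ⟨by norm_num, le_refl _⟩ hle
    linarith [Fhalf ▸ this]
  · have hmono : MonotoneOn Fent (Ico (1/2:ℝ) 1) := by
      apply monotoneOn_of_deriv_nonneg (convex_Ico (1/2) 1)
      · intro y hy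
        exact (Fent_hasDeriv ⟨by linarith [hy.1], hy.2⟩).continuousAt.continuousWithinAt
      · intro y hy
        rw [interior_Ico] at hy
        exact (Fent_hasDeriv ⟨by linarith [hy.1], hy.2⟩).differentiableAt.differentiableWithinAt
      · intro y hy
        rw [interior_Ico] at hy
        have hy' : y ∈ Ioo (0:ℝ) 1 := ⟨by linarith [hy.1], hy.2⟩
        rw [(Fent_hasDeriv hy').deriv]
        have := Gent_mono (⟨by norm_num, by norm_num⟩ : (1/2:ℝ) ∈ Ioo (0:ℝ) 1) hy' (le_of_lt hy.1)
        linarith [Ghalf ▸ this]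
    have := hmono ⟨le_refl _, by norm_num⟩ ⟨le_of_lt hlt, h1⟩ (le_of_lt hlt)
    linarith [Fhalf ▸ this]


end Aux

theorem binomEnt_diff_neg (p : ℝ) (hp : p ∈ Set.Ioo (0:ℝ) 1) (hne : p ≠ 1/2) :
    binomEnt 2 p - binomEnt 1 p - (1/2) * Real.log 2 ≤ 2 * (p - 1/2)^2 * (Real.log 2 - 1)
    ∧ 2 * (p - 1/2)^2 * (Real.log 2 - 1) < 0 := by
  obtain ⟨h0, h1⟩ := hp
  have h1p : (0:ℝ) < 1 - p := by linarith
  have hp0 : p ≠ 0 := ne_of_gt h0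
  have h1p0 : (1:ℝ) - p ≠ 0 := ne_of_gt h1p
  constructor
  · have hkey : 0 ≤ Fent p := Fent_nonneg ⟨h0, h1⟩
    unfold Fent at hkey
    simp only [binomEnt, binomPmf, Finset.sum_range_succ, Finset.sum_range_zero]
    norm_num
    have e3 : Real.log (2 * p * (1-p)) = Real.log 2 + Real.log p + Real.log (1-p) := by
      rw [Real.log_mul (mul_ne_zero two_ne_zero hp0) h1p0, Real.log_mul two_ne_zero hp0]
    rw [e3]
    nlinarith [hkey]
  · have hs : 0 < (p - 1/2)^2 := by
      have : p - 1/2 ≠ 0 := fun h => hne (by linarith [sub_eq_zero.mp h])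
      positivity
    have hl : Real.log 2 < 1 := by
      have := Real.log_two_lt_d9
      linarith
    nlinarith [hs, hl]
end

section
/- For p in (0,1), log 2 − H(p) = ∑_{ν=1}^∞ [2^{2ν} / (2ν(2ν−1))] (p − 1/2)^{2ν}, where H is the binary entropy with natural logarithm. -/
open Real

theorem log_two_sub_binEnt_series (p : ℝ) (hp : p ∈ Set.Ioo (0:ℝ) 1) :
    Real.log 2 - binEnt p =
      ∑' ν : ℕ, (2 ^ (2 * (ν + 1)) : ℝ) / ((2 * (ν + 1)) * (2 * (ν + 1) - 1)) *
        (p - 1/2) ^ (2 * (ν + 1)) := by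
  obtain ⟨hp0, hp1⟩ := hp
  set x : ℝ := 2 * p - 1 with hxdef
  have hx : |x| < 1 := by rw [abs_lt]; constructor <;> [nlinarith; nlinarith]
  have h1 : HasSum (fun k : ℕ => x ^ (2 * k + 2) / (2 * k + 1))
      (x / 2 * (Real.log (1 + x) - Real.log (1 - x))) := by
    have := (Real.hasSum_log_sub_log_of_abs_lt_one hx).mul_left (x / 2)
    convert this using 2 with k
    case e'_3 => rfl
    have h2k : (2 * (k : ℝ) + 1) ≠ 0 := by positivity
    field_simp
    ring
  have hx2 : |x ^ 2| < 1 := by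
    rw [abs_pow, sq_abs]
    nlinarith [abs_nonneg x]
  have h2 : HasSum (fun k : ℕ => x ^ (2 * k + 2) / (2 * k + 2))
      (-Real.log (1 - x ^ 2) / 2) := by
    have := (Real.hasSum_pow_div_log_of_abs_lt_one hx2).div_const 2
    convert this using 2 with k
    case e'_3 => rfl
    have hk : ((k:ℝ)+1) ≠ 0 := by positivity
    rw [← pow_mul, show 2*(k+1) = 2*k+2 from by ring]
    push_cast
    field_simp
  have h3 := h1.sub h2
  have hterm : ∀ k : ℕ, (2 ^ (2 * (k + 1)) : ℝ) / ((2 * (k + 1)) * (2 * (k + 1) - 1)) *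
        (p - 1/2) ^ (2 * (k + 1)) =
      x ^ (2 * k + 2) / (2 * k + 1) - x ^ (2 * k + 2) / (2 * k + 2) := by
    intro k
    have hxp : x ^ (2 * k + 2) = 2 ^ (2 * (k + 1)) * (p - 1/2) ^ (2 * (k + 1)) := by
      rw [show 2 * k + 2 = 2 * (k + 1) by ring, ← mul_pow]
      congr 1
      rw [hxdef]; ring
    have ha : (2 * ((k : ℝ) + 1)) ≠ 0 := by positivity
    have hb : (2 * ((k : ℝ) + 1) - 1) ≠ 0 := by
      have := k.cast_nonneg (α := ℝ)
      intro h; nlinarith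
    have hc : (2 * (k : ℝ) + 1) ≠ 0 := by positivity
    have hd : (2 * (k : ℝ) + 2) ≠ 0 := by positivity
    rw [hxp]
    push_cast
    field_simp
    ring
  have h4 : HasSum (fun k : ℕ => (2 ^ (2 * (k + 1)) : ℝ) / ((2 * (k + 1)) * (2 * (k + 1) - 1)) *
        (p - 1/2) ^ (2 * (k + 1)))
      (x / 2 * (Real.log (1 + x) - Real.log (1 - x)) - -Real.log (1 - x ^ 2) / 2) := by
    convert h3 using 1
    case e'_3 => rfl
    ext k
    exact hterm k
  rw [h4.tsum_eq]
  have hx1 : 1 + x = 2 * p := by rw [hxdef]; ring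
  have hx2' : 1 - x = 2 * (1 - p) := by rw [hxdef]; ring
  have hx3 : 1 - x ^ 2 = (2 * p) * (2 * (1 - p)) := by rw [hxdef]; ring
  have hp0' : (0:ℝ) < 2 * p := by linarith
  have hp1' : (0:ℝ) < 2 * (1 - p) := by linarith
  rw [hx1, hx2', hx3, Real.log_mul (ne_of_gt hp0') (ne_of_gt hp1'),
    Real.log_mul two_ne_zero (hp0.ne'), Real.log_mul two_ne_zero (by linarith : (1:ℝ) - p ≠ 0)]
  unfold binEnt
  rw [hxdef]
  ring
end

section
/- For every p ∈ (0,1), every x ∈ (0,1), and every nonnegative integer l, H(p) − H(x) ≥ ∑_{k=1}^{2l+1} F^{(k)}(p) (x − p)^k, where F^{(1)}(p) = log(p/(1−p)) and F^{(k)}(p) = [ (1−p)^{−(k−1)} + (−1)^k p^{−(k−1)} ] / (k(k−1)) for k ≥ 2. -/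
open Real

noncomputable def Fcoef (k : ℕ) (p : ℝ) : ℝ :=
  if k = 1 then Real.log (p / (1 - p))
  else ((1 - p) ^ (-((k : ℤ) - 1)) + (-1 : ℝ) ^ k * p ^ (-((k : ℤ) - 1))) /
        ((k : ℝ) * ((k : ℝ) - 1))


noncomputable def dCh : ℕ → ℝ → ℝ
  | 0 => fun t => t * Real.log t + (1 - t) * Real.log (1 - t)
  | 1 => fun t => Real.log t - Real.log (1 - t)
  | (k+2) => fun t => (Nat.factorial k : ℝ) *
      ((-1)^k * t ^ (-((k:ℤ)+1)) + (1-t) ^ (-((k:ℤ)+1)))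

lemma hasDerivAt_dCh (k : ℕ) {t : ℝ} (ht : t ∈ Set.Ioo (0:ℝ) 1) :
    HasDerivAt (dCh k) (dCh (k+1) t) t := by
  obtain ⟨ht0, ht1⟩ := ht
  have htne : t ≠ 0 := ne_of_gt ht0
  have h1t : (0:ℝ) < 1 - t := by linarith
  have h1tne : (1:ℝ) - t ≠ 0 := ne_of_gt h1t
  have hsub : HasDerivAt (fun t : ℝ => 1 - t) (-1) t := by
    simpa using (hasDerivAt_id t).const_sub 1
  match k with
  | 0 =>
    have h1 : HasDerivAt (fun t : ℝ => t * Real.log t) (Real.log t + 1) t := by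
      have := (hasDerivAt_id t).mul (Real.hasDerivAt_log htne)
      exact this.congr_deriv (by simp [mul_inv_cancel₀ htne])
    have hl : HasDerivAt (fun t : ℝ => Real.log (1 - t)) (-(1-t)⁻¹) t := by
      exact ((Real.hasDerivAt_log h1tne).comp t hsub).congr_deriv (by ring)
    have h2 : HasDerivAt (fun t : ℝ => (1 - t) * Real.log (1 - t))
        (-(Real.log (1 - t) + 1)) t := by
      have := hsub.mul hl
      have e : -1 * Real.log (1 - t) + (1 - t) * -(1 - t)⁻¹ = -(Real.log (1 - t) + 1) := by
        field_simp
        ring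
      rw [e] at this
      exact this
    have h := h1.add h2
    have e : Real.log t + 1 + -(Real.log (1 - t) + 1) = Real.log t - Real.log (1 - t) := by ring
    rw [e] at h
    exact h
  | 1 =>
    have hl1 : HasDerivAt (fun t : ℝ => Real.log t) t⁻¹ t := Real.hasDerivAt_log htne
    have hl2 : HasDerivAt (fun t : ℝ => Real.log (1 - t)) (-(1-t)⁻¹) t := by
      exact ((Real.hasDerivAt_log h1tne).comp t hsub).congr_deriv (by ring)
    have h := hl1.sub hl2
    have e : t⁻¹ - -(1-t)⁻¹ = dCh 2 t := by
      show _ = (Nat.factorial 0 : ℝ) * ((-1)^0 * t ^ (-((0:ℕ):ℤ)+ -1) + (1-t) ^ (-((0:ℕ):ℤ) + -1))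
      norm_num [zpow_neg]
    rw [e] at h
    exact h
  | (k+2) =>
    have hz1 : HasDerivAt (fun t : ℝ => t ^ (-((k:ℤ)+1)))
        ((-((k:ℤ)+1)) * t ^ (-((k:ℤ)+1) - 1)) t := by
      simpa using hasDerivAt_zpow (-((k:ℤ)+1)) t (Or.inl htne)
    have hz2 : HasDerivAt (fun t : ℝ => (1-t) ^ (-((k:ℤ)+1)))
        (((k:ℤ)+1) * (1-t) ^ (-((k:ℤ)+1) - 1)) t := by
      have := (hasDerivAt_zpow (-((k:ℤ)+1)) (1-t) (Or.inl h1tne)).comp t hsub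
      have e : (↑(-((k:ℤ)+1)) : ℝ) * (1-t) ^ (-((k:ℤ)+1) - 1) * (-1)
          = ((k:ℤ)+1) * (1-t) ^ (-((k:ℤ)+1) - 1) := by push_cast; ring
      rw [← e]
      exact this
    have h := ((hz1.const_mul ((-1:ℝ)^k)).add hz2).const_mul (Nat.factorial k : ℝ)
    have e : (Nat.factorial k : ℝ) *
        ((-1:ℝ)^k * ((-((k:ℤ)+1)) * t ^ (-((k:ℤ)+1) - 1)) + ((k:ℤ)+1) * (1-t) ^ (-((k:ℤ)+1) - 1))
        = dCh (k+3) t := by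
      show _ = (Nat.factorial (k+1) : ℝ) *
        ((-1)^(k+1) * t ^ (-(((k+1):ℕ):ℤ)+ -1) + (1-t) ^ (-(((k+1):ℕ):ℤ) + -1))
      rw [Nat.factorial_succ]
      push_cast
      have e1 : (-((k:ℤ)+1) - 1) = (-((k:ℤ)+1)+ -1) := by ring
      rw [e1]
      ring
    rw [e] at h
    exact h


noncomputable def Rrem (p : ℝ) (j n : ℕ) (x : ℝ) : ℝ :=
  dCh j x - ∑ k ∈ Finset.range (n+1), dCh (j+k) p / (Nat.factorial k) * (x - p) ^ k

lemma dCh_nonneg {k : ℕ} (hk : Even k) {t : ℝ} (ht : t ∈ Set.Ioo (0:ℝ) 1) :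
    0 ≤ dCh (k+2) t := by
  obtain ⟨ht0, ht1⟩ := ht
  have h1t : (0:ℝ) < 1 - t := by linarith
  show 0 ≤ (Nat.factorial k : ℝ) * ((-1)^k * t ^ (-((k:ℤ)+1)) + (1-t) ^ (-((k:ℤ)+1)))
  rw [hk.neg_one_pow]
  positivity

lemma hasDerivAt_Rrem (p : ℝ) (j n : ℕ) {x : ℝ} (hx : x ∈ Set.Ioo (0:ℝ) 1) :
    HasDerivAt (Rrem p j (n+1)) (Rrem p (j+1) n x) x := by
  have hsum : HasDerivAt
      (fun y => ∑ k ∈ Finset.range (n+2), dCh (j+k) p / (Nat.factorial k) * (y - p) ^ k)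
      (∑ k ∈ Finset.range (n+2), dCh (j+k) p / (Nat.factorial k) * ((k:ℝ) * (x - p) ^ (k-1)))
      x := by
    apply HasDerivAt.fun_sum
    intro k _
    have h : HasDerivAt (fun y : ℝ => (y - p) ^ k) ((k:ℝ) * (x - p) ^ (k-1)) x := by
      exact (((hasDerivAt_id x).sub_const p).pow k).congr_deriv (by simp)
    exact h.const_mul _
  have e : ∑ k ∈ Finset.range (n+2), dCh (j+k) p / (Nat.factorial k) * ((k:ℝ) * (x - p) ^ (k-1))
      = ∑ k ∈ Finset.range (n+1), dCh (j+1+k) p / (Nat.factorial k) * (x - p) ^ k := by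
    rw [Finset.sum_range_succ']
    simp only [Nat.cast_zero, zero_mul, mul_zero, add_zero]
    apply Finset.sum_congr rfl
    intro i _
    have : (Nat.factorial (i+1) : ℝ) = (i+1) * Nat.factorial i := by
      rw [Nat.factorial_succ]; push_cast; ring
    rw [this]
    have hfac : (Nat.factorial i : ℝ) ≠ 0 := by positivity
    have : j + (i+1) = j + 1 + i := by ring
    rw [this]
    simp only [Nat.add_sub_cancel, Nat.cast_add, Nat.cast_one]
    field_simp
  have h := (hasDerivAt_dCh j hx).sub hsum
  rw [e] at h
  exact h

lemma Rrem_self (p : ℝ) (j n : ℕ) : Rrem p j n p = 0 := by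
  unfold Rrem
  rw [Finset.sum_eq_single_of_mem 0 (by simp)]
  · simp [Nat.factorial]
  · intro k _ hk
    simp [sub_self, zero_pow hk]

lemma key (p : ℝ) (hp : p ∈ Set.Ioo (0:ℝ) 1) :
    ∀ n j, Odd (j + n) → ∀ x ∈ Set.Ioo (0:ℝ) 1,
      (p ≤ x → 0 ≤ Rrem p j n x) ∧ (x ≤ p → 0 ≤ (-1:ℝ)^(n+1) * Rrem p j n x) := by
  intro n
  induction n with
  | zero =>
    intro j hodd x hx
    -- dCh j is monotone on Ioo 0 1, since j = m+1 with m+1 odd hence dCh (j+1) ≥ 0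
    obtain ⟨m, hm⟩ := hodd
    have hj : j = 2*m + 1 := by omega
    have hmono : MonotoneOn (dCh j) (Set.Ioo (0:ℝ) 1) := by
      apply monotoneOn_of_deriv_nonneg (convex_Ioo 0 1)
      · exact fun t ht => (hasDerivAt_dCh j ht).continuousAt.continuousWithinAt
      · intro t ht
        rw [interior_Ioo] at ht
        exact (hasDerivAt_dCh j ht).differentiableAt.differentiableWithinAt
      · intro t ht
        rw [interior_Ioo] at ht
        rw [(hasDerivAt_dCh j ht).deriv]
        have : j + 1 = 2*m + 2 := by omega
        rw [this]
        exact dCh_nonneg (even_two_mul m) ht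
    have hR : ∀ y, Rrem p j 0 y = dCh j y - dCh j p := by
      intro y; unfold Rrem; simp [Nat.factorial]
    constructor
    · intro hpx
      rw [hR, sub_nonneg]
      exact hmono hp hx hpx
    · intro hxp
      rw [hR]
      have : ((-1:ℝ))^(0+1) = -1 := by norm_num
      rw [this]
      have := hmono hx hp hxp
      nlinarith
  | succ n ih =>
    intro j hodd x hx
    have hodd' : Odd (j + 1 + n) := by
      obtain ⟨m, hm⟩ := hodd; exact ⟨m, by omega⟩
    -- derivative facts
    have hd : ∀ y ∈ Set.Ioo (0:ℝ) 1, HasDerivAt (Rrem p j (n+1)) (Rrem p (j+1) n y) y :=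
      fun y hy => hasDerivAt_Rrem p j n hy
    constructor
    · intro hpx
      have hsub : Set.Icc p x ⊆ Set.Ioo (0:ℝ) 1 := by
        intro y hy
        exact ⟨lt_of_lt_of_le hp.1 hy.1, lt_of_le_of_lt hy.2 hx.2⟩
      have hmono : MonotoneOn (Rrem p j (n+1)) (Set.Icc p x) := by
        apply monotoneOn_of_deriv_nonneg (convex_Icc p x)
        · exact fun y hy => (hd y (hsub hy)).continuousAt.continuousWithinAt
        · intro y hy
          have hy' := hsub (interior_subset hy)
          exact (hd y hy').differentiableAt.differentiableWithinAt
        · intro y hy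
          rw [interior_Icc] at hy
          have hy' := hsub (Set.Ioo_subset_Icc_self hy)
          rw [(hd y hy').deriv]
          exact ((ih (j+1) hodd' y hy').1 (le_of_lt hy.1))
      have := hmono (Set.left_mem_Icc.2 hpx) (Set.right_mem_Icc.2 hpx) hpx
      rw [Rrem_self] at this
      exact this
    · intro hxp
      have hsub : Set.Icc x p ⊆ Set.Ioo (0:ℝ) 1 := by
        intro y hy
        exact ⟨lt_of_lt_of_le hx.1 hy.1, lt_of_le_of_lt hy.2 hp.2⟩
      rcases Nat.even_or_odd n with hn | hn
      · -- n even : (-1)^(n+1) = -1 on IH, so Rrem (j+1) n ≤ 0 left of p; antitone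
        have hanti : AntitoneOn (Rrem p j (n+1)) (Set.Icc x p) := by
          apply antitoneOn_of_deriv_nonpos (convex_Icc x p)
          · exact fun y hy => (hd y (hsub hy)).continuousAt.continuousWithinAt
          · intro y hy
            have hy' := hsub (interior_subset hy)
            exact (hd y hy').differentiableAt.differentiableWithinAt
          · intro y hy
            rw [interior_Icc] at hy
            have hy' := hsub (Set.Ioo_subset_Icc_self hy)
            rw [(hd y hy').deriv]
            have h2 := (ih (j+1) hodd' y hy').2 (le_of_lt hy.2)
            rw [hn.add_one.neg_one_pow] at h2
            nlinarith
        have := hanti (Set.left_mem_Icc.2 hxp) (Set.right_mem_Icc.2 hxp) hxp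
        rw [Rrem_self] at this
        have he : ((-1:ℝ))^(n+1+1) = 1 := (hn.add_one.add_one).neg_one_pow
        rw [he]; linarith
      · -- n odd : Rrem (j+1) n ≥ 0 left of p; monotone; Rrem x ≤ 0
        have hmono : MonotoneOn (Rrem p j (n+1)) (Set.Icc x p) := by
          apply monotoneOn_of_deriv_nonneg (convex_Icc x p)
          · exact fun y hy => (hd y (hsub hy)).continuousAt.continuousWithinAt
          · intro y hy
            have hy' := hsub (interior_subset hy)
            exact (hd y hy').differentiableAt.differentiableWithinAt
          · intro y hy
            rw [interior_Icc] at hy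
            have hy' := hsub (Set.Ioo_subset_Icc_self hy)
            rw [(hd y hy').deriv]
            have h2 := (ih (j+1) hodd' y hy').2 (le_of_lt hy.2)
            rw [hn.add_one.neg_one_pow] at h2
            linarith
        have := hmono (Set.left_mem_Icc.2 hxp) (Set.right_mem_Icc.2 hxp) hxp
        rw [Rrem_self] at this
        have he : ((-1:ℝ))^(n+1+1) = -1 := (hn.add_one.add_one).neg_one_pow
        rw [he]; linarith

lemma dCh_div_factorial (k : ℕ) (hk : 1 ≤ k) {p : ℝ} (hp : p ∈ Set.Ioo (0:ℝ) 1) :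
    dCh k p / (Nat.factorial k) = Fcoef k p := by
  obtain ⟨hp0, hp1⟩ := hp
  have h1p : (0:ℝ) < 1 - p := by linarith
  match k with
  | 1 =>
    show (Real.log p - Real.log (1-p)) / (Nat.factorial 1 : ℝ) = Fcoef 1 p
    rw [Fcoef, if_pos rfl, Real.log_div (ne_of_gt hp0) (ne_of_gt h1p)]
    simp [Nat.factorial]
  | (m+2) =>
    show ((Nat.factorial m : ℝ) * ((-1)^m * p ^ (-((m:ℤ)+1)) + (1-p) ^ (-((m:ℤ)+1))))
        / (Nat.factorial (m+2)) = Fcoef (m+2) p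
    rw [Fcoef, if_neg (by omega)]
    have hfac : (Nat.factorial (m+2) : ℝ) = (m+2) * (m+1) * Nat.factorial m := by
      rw [Nat.factorial_succ, Nat.factorial_succ]; push_cast; ring
    have e1 : (-(((m:ℕ)+2 : ℕ) : ℤ) + 1) = -((m:ℤ)+1) := by push_cast; ring
    have e2 : ((-1:ℝ)) ^ (m+2) = (-1:ℝ)^m := by ring
    have hne : (Nat.factorial m : ℝ) ≠ 0 := by positivity
    rw [hfac]
    push_cast
    have e3 : (-(((m:ℤ)+2) - 1)) = -((m:ℤ)+1) := by ring
    rw [e3, e2]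
    rw [div_eq_div_iff (by positivity) (by nlinarith [Nat.cast_nonneg (α := ℝ) m])]
    ring

theorem binEnt_taylor_lower_bound (p : ℝ) (hp : p ∈ Set.Ioo (0:ℝ) 1)
    (x : ℝ) (hx : x ∈ Set.Ioo (0:ℝ) 1) (l : ℕ) :
    binEnt p - binEnt x ≥
      ∑ k ∈ Finset.Icc 1 (2 * l + 1), Fcoef k p * (x - p) ^ k := by
  have hR : 0 ≤ Rrem p 0 (2*l+1) x := by
    have h := key p hp (2*l+1) 0 ⟨l, by ring⟩ x hx
    rcases le_total p x with hpx | hxp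
    · exact h.1 hpx
    · have := h.2 hxp
      have he : ((-1:ℝ))^(2*l+1+1) = 1 := by
        rw [pow_succ, pow_succ]; rw [Even.neg_one_pow ⟨l, by ring⟩]; norm_num
      rw [he, one_mul] at this
      exact this
  have hsum : ∑ k ∈ Finset.range (2*l+1+1), dCh (0+k) p / (Nat.factorial k) * (x - p) ^ k
      = dCh 0 p + ∑ k ∈ Finset.Icc 1 (2*l+1), Fcoef k p * (x - p) ^ k := by
    rw [Finset.sum_range_succ']
    simp only [zero_add, pow_zero, mul_one, Nat.factorial_zero, Nat.cast_one, div_one]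
    rw [add_comm]
    congr 1
    apply Finset.sum_nbij' (fun i => i + 1) (fun k => k - 1)
    · intro i hi; simp at hi ⊢; omega
    · intro k hk; simp at hk ⊢; omega
    · intro i hi; omega
    · intro k hk; simp at hk; omega
    · intro i _
      rw [dCh_div_factorial (i+1) (by omega) hp]
  have hbin : ∀ t : ℝ, dCh 0 t = -(binEnt t) := by
    intro t; show t * Real.log t + (1-t) * Real.log (1-t) = _
    rw [binEnt]; ring
  rw [Rrem, hsum, hbin, hbin] at hR
  linarith
end

section
/- Let P = {p_i} and Q = {q_i} be probability distributions on a finite alphabet A, let p ∈ (0,1), q = 1−p, M = pP + qQ. Then p·D(P‖M) + q·D(Q‖M) = ∑_{ν=1}^∞ [1/(2ν(2ν−1))] · ∑_{i∈A} |p p_i − q q_i|^{2ν} / (p p_i + q q_i)^{2ν−1} − (log 2 − H(p)), where D is the Kullback–Leibler divergence (natural log) and H(p) the binary entropy. -/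
open Real

open Filter Finset Topology in

lemma hasSum_log_two' : HasSum (fun ν : ℕ => 1/((2*(ν:ℝ)+1)*(2*ν+2))) (Real.log 2) := by
  have hnn : ∀ ν : ℕ, (0:ℝ) ≤ 1/((2*(ν:ℝ)+1)*(2*ν+2)) := fun ν => by positivity
  rw [hasSum_iff_tendsto_nat_of_nonneg hnn]
  have key : ∀ n : ℕ, ∑ ν ∈ range n, 1/((2*(ν:ℝ)+1)*(2*ν+2))
      = (harmonic (2*n) : ℝ) - harmonic n := by
    intro n
    induction n with
    | zero => simp
    | succ n ih =>
      rw [Finset.sum_range_succ, ih, show 2*(n+1) = (2*n+1)+1 by ring,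
        harmonic_succ, harmonic_succ, harmonic_succ]
      push_cast
      have h1 : (2*(n:ℝ)+1) ≠ 0 := by positivity
      have h2 : (2*(n:ℝ)+2) ≠ 0 := by positivity
      have h3 : ((n:ℝ)+1) ≠ 0 := by positivity
      field_simp
      ring
  simp only [key]
  have hcomp : Tendsto (fun n : ℕ => 2*n) atTop atTop :=
    tendsto_atTop_atTop.mpr fun b => ⟨b, fun a ha => by omega⟩
  have T2 : Tendsto (fun n : ℕ => (harmonic (2*n) : ℝ) - Real.log (2*n)) atTop
      (𝓝 Real.eulerMascheroniConstant) := by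
    have := Real.tendsto_harmonic_sub_log.comp hcomp
    apply this.congr
    intro n
    simp only [Function.comp]
    push_cast
    ring_nf
  have T1 := Real.tendsto_harmonic_sub_log
  have := (T2.sub T1).add_const (Real.log 2)
  rw [sub_self, zero_add] at this
  apply this.congr'
  filter_upwards [eventually_ge_atTop 1] with n hn
  have hn' : (n:ℝ) ≠ 0 := Nat.cast_ne_zero.mpr (by omega)
  push_cast
  rw [Real.log_mul two_ne_zero hn']
  ring



open Filter Finset Topology in
lemma hasSum_sq_series {t : ℝ} (ht : |t| ≤ 1) :
    HasSum (fun ν : ℕ => t ^ (2*ν+2) / ((2*(ν:ℝ)+1)*(2*ν+2)))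
      (((1+t) * Real.log (1+t) + (1-t) * Real.log (1-t)) / 2) := by
  rcases lt_or_eq_of_le ht with h | h
  · have h1 : -1 < t := neg_lt_of_abs_lt h
    have h2 : t < 1 := lt_of_abs_lt h
    have A := (hasSum_log_sub_log_of_abs_lt_one h).mul_left t
    have hsq : |t^2| < 1 := by
      rw [abs_pow]
      exact pow_lt_one₀ (abs_nonneg t) h (by norm_num)
    have B := hasSum_pow_div_log_of_abs_lt_one hsq
    have C := (A.sub B).div_const 2
    have hfun : (fun ν : ℕ => t ^ (2*ν+2) / ((2*(ν:ℝ)+1)*(2*ν+2)))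
        = fun k : ℕ => (t * ((2:ℝ) * (1/(2*(k:ℝ)+1)) * t^(2*k+1)) - (t^2)^(k+1)/((k:ℝ)+1))/2 := by
      funext k
      have hk1 : (2*(k:ℝ)+1) ≠ 0 := by positivity
      have hk2 : ((k:ℝ)+1) ≠ 0 := by positivity
      have hpow : (t^2)^(k+1) = t^(2*k+2) := by ring
      rw [hpow]
      field_simp
      ring
    have hval : ((1+t) * Real.log (1+t) + (1-t) * Real.log (1-t)) / 2
        = (t * (Real.log (1+t) - Real.log (1-t)) - -Real.log (1 - t^2)) / 2 := by
      rw [show (1:ℝ) - t^2 = (1+t)*(1-t) by ring,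
        Real.log_mul (by linarith) (by linarith)]
      ring
    rw [hfun, hval]
    exact C
  · -- |t| = 1
    have ht2 : t^2 = 1 := by rw [← sq_abs, h]; norm_num
    have hfun : (fun ν : ℕ => t ^ (2*ν+2) / ((2*(ν:ℝ)+1)*(2*ν+2)))
        = fun ν : ℕ => 1/((2*(ν:ℝ)+1)*(2*ν+2)) := by
      funext ν
      rw [show 2*ν+2 = 2*(ν+1) by ring, pow_mul, ht2, one_pow]
    rw [hfun]
    have hval : ((1+t) * Real.log (1+t) + (1-t) * Real.log (1-t)) / 2 = Real.log 2 := by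
      rcases (abs_eq (by norm_num : (0:ℝ) ≤ 1)).mp h with rfl | rfl <;>
        simp <;> ring
    rw [hval]
    exact hasSum_log_two'


open Filter Finset Topology in
lemma hasSum_index {a b : ℝ} (ha : 0 ≤ a) (hb : 0 ≤ b) :
    HasSum (fun ν : ℕ => |a - b| ^ (2*ν+2) / (a+b) ^ (2*ν+1) / ((2*(ν:ℝ)+1)*(2*ν+2)))
      (a * Real.log (a/(a+b)) + b * Real.log (b/(a+b)) + (a+b) * Real.log 2) := by
  rcases eq_or_lt_of_le (add_nonneg ha hb) with h | hm
  · have ha0 : a = 0 := by linarith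
    have hb0 : b = 0 := by linarith
    subst ha0; subst hb0
    simpa using hasSum_zero
  · have hmne : a + b ≠ 0 := ne_of_gt hm
    set t : ℝ := (a-b)/(a+b) with hts
    have ht : |t| ≤ 1 := by
      rw [hts, abs_div, abs_of_pos hm, div_le_one hm]
      exact abs_le.mpr ⟨by linarith, by linarith⟩
    have H := (hasSum_sq_series ht).mul_left (a+b)
    have hfun : (fun ν : ℕ => |a - b| ^ (2*ν+2) / (a+b) ^ (2*ν+1) / ((2*(ν:ℝ)+1)*(2*ν+2)))
        = fun ν : ℕ => (a+b) * (t ^ (2*ν+2) / ((2*(ν:ℝ)+1)*(2*ν+2))) := by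
      funext ν
      have habs : |a - b| ^ (2*ν+2) = (a-b) ^ (2*ν+2) :=
        Even.pow_abs (by exact ⟨ν+1, by ring⟩) _
      have hc : ((2*(ν:ℝ)+1)*(2*ν+2)) ≠ 0 := by positivity
      have hp1 : (a+b) ^ (2*ν+1) ≠ 0 := pow_ne_zero _ hmne
      have hp2 : (a+b) ^ (2*ν+2) ≠ 0 := pow_ne_zero _ hmne
      rw [habs, hts, div_pow]
      rw [pow_succ (a+b) (2*ν+1)] 
      field_simp
    have h1t : 1 + t = 2*a/(a+b) := by rw [hts]; field_simp; ring
    have h2t : 1 - t = 2*b/(a+b) := by rw [hts]; field_simp; ring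
    have hlog : ∀ x : ℝ, 0 ≤ x → x * Real.log (2*x/(a+b)) = x * Real.log (x/(a+b)) + x * Real.log 2 := by
      intro x hx
      rcases eq_or_lt_of_le hx with rfl | hx'
      · simp
      · rw [show 2*x/(a+b) = 2*(x/(a+b)) by ring,
          Real.log_mul two_ne_zero (div_ne_zero (ne_of_gt hx') hmne)]
        ring
    have hval : (a+b) * ((((1+t) * Real.log (1+t) + (1-t) * Real.log (1-t))) / 2)
        = a * Real.log (a/(a+b)) + b * Real.log (b/(a+b)) + (a+b) * Real.log 2 := by
      rw [h1t, h2t]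
      have e1 : (a+b) * (((2*a/(a+b)) * Real.log (2*a/(a+b)) + (2*b/(a+b)) * Real.log (2*b/(a+b))) / 2)
          = a * Real.log (2*a/(a+b)) + b * Real.log (2*b/(a+b)) := by
        field_simp
      rw [e1, hlog a ha, hlog b hb]
      ring
    rw [hfun, ← hval]
    exact H


open Filter Finset Topology in
theorem capacitory_discrimination_series {α : Type*} [Fintype α]
    (P Q : α → ℝ) (hP0 : ∀ i, 0 ≤ P i) (hQ0 : ∀ i, 0 ≤ Q i)
    (hP1 : ∑ i, P i = 1) (hQ1 : ∑ i, Q i = 1)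
    (p : ℝ) (hp : p ∈ Set.Ioo (0:ℝ) 1) :
    p * (∑ i, P i * Real.log (P i / (p * P i + (1 - p) * Q i)))
      + (1 - p) * (∑ i, Q i * Real.log (Q i / (p * P i + (1 - p) * Q i)))
    = (∑' ν : ℕ, (1 : ℝ) / ((2 * (ν + 1)) * (2 * (ν + 1) - 1)) *
        ∑ i, |p * P i - (1 - p) * Q i| ^ (2 * (ν + 1)) /
              (p * P i + (1 - p) * Q i) ^ (2 * (ν + 1) - 1))
      - (Real.log 2 - binEnt p) := by
  obtain ⟨hp0, hp1⟩ := hp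
  have hq0 : (0:ℝ) < 1 - p := by linarith
  have key : ∀ i : α, HasSum
      (fun ν : ℕ => |p * P i - (1 - p) * Q i| ^ (2*ν+2) /
        (p * P i + (1 - p) * Q i) ^ (2*ν+1) / ((2*(ν:ℝ)+1)*(2*ν+2)))
      (p * P i * Real.log (p * P i/(p * P i + (1 - p) * Q i))
        + (1 - p) * Q i * Real.log ((1 - p) * Q i/(p * P i + (1 - p) * Q i))
        + (p * P i + (1 - p) * Q i) * Real.log 2) :=
    fun i => hasSum_index (mul_nonneg hp0.le (hP0 i)) (mul_nonneg hq0.le (hQ0 i))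
  have total := hasSum_sum (fun i (_ : i ∈ Finset.univ) => key i)
  have he1 : ∀ ν : ℕ, 2*(ν+1) = 2*ν+2 := fun ν => by ring
  have he2 : ∀ ν : ℕ, 2*ν+2-1 = 2*ν+1 := fun ν => by omega
  have hts : (∑' ν : ℕ, (1 : ℝ) / ((2 * (ν + 1)) * (2 * (ν + 1) - 1)) *
        ∑ i, |p * P i - (1 - p) * Q i| ^ (2 * (ν + 1)) /
              (p * P i + (1 - p) * Q i) ^ (2 * (ν + 1) - 1))
      = ∑ i, (p * P i * Real.log (p * P i/(p * P i + (1 - p) * Q i))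
        + (1 - p) * Q i * Real.log ((1 - p) * Q i/(p * P i + (1 - p) * Q i))
        + (p * P i + (1 - p) * Q i) * Real.log 2) := by
    rw [← total.tsum_eq]
    apply tsum_congr
    intro ν
    rw [Finset.mul_sum]
    refine Finset.sum_congr rfl fun i _ => ?_
    simp only [he1, he2]
    ring
  rw [hts]
  have hsum3 : ∑ i, (p * P i * Real.log (p * P i/(p * P i + (1 - p) * Q i))
        + (1 - p) * Q i * Real.log ((1 - p) * Q i/(p * P i + (1 - p) * Q i))
        + (p * P i + (1 - p) * Q i) * Real.log 2)
      = (∑ i, p * P i * Real.log (p * P i/(p * P i + (1 - p) * Q i)))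
        + (∑ i, (1 - p) * Q i * Real.log ((1 - p) * Q i/(p * P i + (1 - p) * Q i)))
        + (∑ i, (p * P i + (1 - p) * Q i)) * Real.log 2 := by
    rw [Finset.sum_add_distrib, Finset.sum_add_distrib, ← Finset.sum_mul]
  have hm1 : ∑ i, (p * P i + (1 - p) * Q i) = 1 := by
    rw [Finset.sum_add_distrib, ← Finset.mul_sum, ← Finset.mul_sum, hP1, hQ1]
    ring
  have hA : ∑ i, p * P i * Real.log (p * P i/(p * P i + (1 - p) * Q i))
      = p * (∑ i, P i * Real.log (P i / (p * P i + (1 - p) * Q i))) + p * Real.log p := by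
    have hterm : ∀ i, p * P i * Real.log (p * P i/(p * P i + (1 - p) * Q i))
        = p * (P i * Real.log (P i / (p * P i + (1 - p) * Q i))) + Real.log p * (p * P i) := by
      intro i
      rcases eq_or_lt_of_le (hP0 i) with h | h
      · rw [← h]; simp
      · have mpos : 0 < p * P i + (1 - p) * Q i :=
          add_pos_of_pos_of_nonneg (mul_pos hp0 h) (mul_nonneg hq0.le (hQ0 i))
        rw [show p * P i/(p * P i + (1 - p) * Q i)
            = p * (P i/(p * P i + (1 - p) * Q i)) by ring,
          Real.log_mul hp0.ne' (div_ne_zero h.ne' mpos.ne')]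
        ring
    rw [Finset.sum_congr rfl fun i _ => hterm i, Finset.sum_add_distrib]
    simp only [← Finset.mul_sum]
    rw [hP1]
    ring
  have hB : ∑ i, (1 - p) * Q i * Real.log ((1 - p) * Q i/(p * P i + (1 - p) * Q i))
      = (1 - p) * (∑ i, Q i * Real.log (Q i / (p * P i + (1 - p) * Q i)))
        + (1 - p) * Real.log (1 - p) := by
    have hterm : ∀ i, (1 - p) * Q i * Real.log ((1 - p) * Q i/(p * P i + (1 - p) * Q i))
        = (1 - p) * (Q i * Real.log (Q i / (p * P i + (1 - p) * Q i)))
          + Real.log (1 - p) * ((1 - p) * Q i) := by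
      intro i
      rcases eq_or_lt_of_le (hQ0 i) with h | h
      · rw [← h]; simp
      · have mpos : 0 < p * P i + (1 - p) * Q i :=
          add_pos_of_nonneg_of_pos (mul_nonneg hp0.le (hP0 i)) (mul_pos hq0 h)
        rw [show (1 - p) * Q i/(p * P i + (1 - p) * Q i)
            = (1 - p) * (Q i/(p * P i + (1 - p) * Q i)) by ring,
          Real.log_mul hq0.ne' (div_ne_zero h.ne' mpos.ne')]
        ring
    rw [Finset.sum_congr rfl fun i _ => hterm i, Finset.sum_add_distrib]
    simp only [← Finset.mul_sum]
    rw [hQ1]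
    ring
  rw [hsum3, hA, hB, hm1]
  simp only [binEnt]
  ring
end

section
/- For p ∈ (0,1) and n ≥ 1, H[B(n+1,p)] − H[B(n,p)] = H(p) − ∑_{i=0}^{n+1} H(i/(n+1)) · P_{B(n+1,p)}(i), where H on the right denotes the binary entropy function. -/
open Real

lemma sum_binomPmf (N : ℕ) (p : ℝ) : ∑ k ∈ Finset.range (N+1), binomPmf N p k = 1 := by
  have h := add_pow p (1-p) N
  simp only [add_sub_cancel, one_pow] at h
  have h2 : ∑ k ∈ Finset.range (N+1), binomPmf N p k
      = ∑ k ∈ Finset.range (N+1), p ^ k * (1-p) ^ (N-k) * (N.choose k : ℝ) :=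
    Finset.sum_congr rfl fun k _ => by unfold binomPmf; ring
  rw [h2, ← h]

lemma sum_mul_binomPmf (N : ℕ) (p : ℝ) :
    ∑ k ∈ Finset.range (N+1), (k:ℝ) * binomPmf N p k = N * p := by
  cases N with
  | zero => simp [binomPmf]
  | succ M =>
    rw [Finset.sum_range_succ']
    simp only [Nat.cast_zero, zero_mul, add_zero]
    push_cast
    have key : ∀ i ∈ Finset.range (M+1), ((i:ℝ)+1) * binomPmf (M+1) p (i+1)
        = ((M:ℝ)+1) * p * binomPmf M p i := by
      intro i hi
      unfold binomPmf
      have h : (M+1) * M.choose i = (M+1).choose (i+1) * (i+1) := Nat.add_one_mul_choose_eq M i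
      have h' : ((M:ℝ)+1) * (M.choose i : ℝ) = ((M+1).choose (i+1) : ℝ) * ((i:ℝ)+1) := by
        exact_mod_cast congrArg (Nat.cast : ℕ → ℝ) h
      have hsub : (M+1) - (i+1) = M - i := Nat.add_sub_add_right M 1 i
      rw [hsub, pow_succ]
      linear_combination (-(p^i * p * (1-p)^(M-i))) * h'
    rw [Finset.sum_congr rfl key, ← Finset.mul_sum, sum_binomPmf]
    push_cast; ring

lemma binomEnt_eq (N : ℕ) (p : ℝ) (hp0 : 0 < p) (hp1 : p < 1) :
    binomEnt N p = N * binEnt p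
      - ∑ k ∈ Finset.range (N+1), binomPmf N p k * Real.log (N.choose k) := by
  have hq : (0:ℝ) < 1 - p := by linarith
  have key : ∀ k ∈ Finset.range (N+1),
      binomPmf N p k * Real.log (binomPmf N p k)
        = binomPmf N p k * Real.log (N.choose k)
          + (k:ℝ) * binomPmf N p k * Real.log p
          + ((N:ℝ) - k) * binomPmf N p k * Real.log (1-p) := by
    intro k hk
    have hkN : k ≤ N := by have := Finset.mem_range.mp hk; omega
    have hc : (0:ℝ) < (N.choose k : ℝ) := by exact_mod_cast Nat.choose_pos hkN
    have hlog : Real.log (binomPmf N p k)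
        = Real.log (N.choose k) + (k:ℝ) * Real.log p + ((N - k : ℕ):ℝ) * Real.log (1-p) := by
      unfold binomPmf
      rw [Real.log_mul (by positivity) (by positivity),
        Real.log_mul (by positivity) (by positivity), Real.log_pow, Real.log_pow]
    have hcast : ((N - k : ℕ):ℝ) = (N:ℝ) - (k:ℝ) := by
      rw [Nat.cast_sub hkN]
    rw [hlog, hcast]; ring
  unfold binomEnt
  rw [Finset.sum_congr rfl key, Finset.sum_add_distrib, Finset.sum_add_distrib]
  have h1 : ∑ k ∈ Finset.range (N+1), (k:ℝ) * binomPmf N p k * Real.log p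
      = (N:ℝ) * p * Real.log p := by
    rw [← Finset.sum_mul, sum_mul_binomPmf]
  have h2 : ∑ k ∈ Finset.range (N+1), ((N:ℝ) - k) * binomPmf N p k * Real.log (1-p)
      = (N:ℝ) * (1-p) * Real.log (1-p) := by
    rw [← Finset.sum_mul]
    congr 1
    have h3 : ∑ k ∈ Finset.range (N+1), ((N:ℝ) - k) * binomPmf N p k
        = (N:ℝ) * (∑ k ∈ Finset.range (N+1), binomPmf N p k)
          - ∑ k ∈ Finset.range (N+1), (k:ℝ) * binomPmf N p k := by
      rw [Finset.mul_sum, ← Finset.sum_sub_distrib]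
      exact Finset.sum_congr rfl fun k _ => by ring
    rw [h3, sum_binomPmf, sum_mul_binomPmf]; ring
  rw [h1, h2]
  unfold binEnt; ring

lemma binEnt_scalar (A x : ℝ) (hA : 0 < A) (hx0 : 0 < x) (hx1 : x < 1) :
    binEnt x * A = A * Real.log A - (A*x) * Real.log (A*x)
      - (A*(1-x)) * Real.log (A*(1-x)) := by
  have hx1' : (0:ℝ) < 1 - x := by linarith
  rw [Real.log_mul hA.ne' hx0.ne', Real.log_mul hA.ne' hx1'.ne']
  unfold binEnt; ring

lemma term_eq (p : ℝ) (hp0 : 0 < p) (hp1 : p < 1) (n i : ℕ) (hi : i ≤ n) :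
    binEnt (((i:ℝ)+1) / ((n:ℝ)+1)) * binomPmf (n+1) p (i+1)
      = binomPmf (n+1) p (i+1) * Real.log (((n+1).choose (i+1) : ℕ))
        - p * (binomPmf n p i * Real.log ((n.choose i : ℕ)))
        - (1-p) * (binomPmf n p (i+1) * Real.log ((n.choose (i+1) : ℕ))) := by
  rcases eq_or_lt_of_le hi with h | h
  · subst h
    have h1 : ((i:ℝ)+1)/((i:ℝ)+1) = 1 := by
      have : ((i:ℝ)+1) ≠ 0 := by positivity
      field_simp
    rw [h1]
    simp [binEnt, binomPmf, Nat.choose_self, Nat.choose_succ_self]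
  · -- i + 1 ≤ n
    have hk : i + 1 ≤ n := h
    have hm : (0:ℝ) < (n:ℝ)+1 := by positivity
    set x : ℝ := ((i:ℝ)+1) / ((n:ℝ)+1) with hxdef
    have hx0 : 0 < x := by positivity
    have hx1 : x < 1 := by
      rw [hxdef, div_lt_one hm]
      have : (i:ℝ) < (n:ℝ) := by exact_mod_cast h
      linarith
    set A : ℝ := (((n+1).choose (i+1) : ℕ) : ℝ) with hAdef
    have hA : 0 < A := by
      rw [hAdef]; exact_mod_cast Nat.choose_pos (by omega : i+1 ≤ n+1)
    have hB : ((n.choose i : ℕ) : ℝ) = A * x := by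
      have h1 : (n+1) * n.choose i = (n+1).choose (i+1) * (i+1) :=
        Nat.add_one_mul_choose_eq n i
      have h2 : ((n:ℝ)+1) * (n.choose i : ℝ) = A * ((i:ℝ)+1) := by
        rw [hAdef]; exact_mod_cast congrArg (Nat.cast : ℕ → ℝ) h1
      rw [hxdef]
      field_simp
      linarith [h2]
    have hD : ((n.choose (i+1) : ℕ) : ℝ) = A * (1 - x) := by
      have h1 : n.choose (i+1) * (n + 1) = (n+1).choose (i+1) * (n + 1 - (i+1)) :=
        Nat.choose_mul_succ_eq n (i+1)
      have h1' : n.choose (i+1) * (n + 1) = (n+1).choose (i+1) * (n - i) := by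
        rw [h1]; congr 1; omega
      have h2 : (n.choose (i+1) : ℝ) * ((n:ℝ)+1) = A * ((n:ℝ) - i) := by
        rw [hAdef]
        have := congrArg (Nat.cast : ℕ → ℝ) h1'
        push_cast [Nat.cast_sub (by omega : i ≤ n)] at this
        linarith [this]
      have h3 : 1 - x = ((n:ℝ) - i) / ((n:ℝ)+1) := by
        rw [hxdef]; field_simp; ring
      have h4 : A * (1-x) = (A * ((n:ℝ) - i)) / ((n:ℝ)+1) := by rw [h3]; ring
      rw [h4, eq_div_iff hm.ne']
      linarith [h2]
    have key := binEnt_scalar A x hA hx0 hx1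
    unfold binomPmf
    rw [← hAdef, hB, hD]
    have e1 : n + 1 - (i + 1) = (n - (i+1)) + 1 := by omega
    have e2 : n - i = (n - (i+1)) + 1 := by omega
    rw [e1, e2, pow_succ, pow_succ]
    linear_combination (p^i * p * (1-p)^(n-(i+1)) * (1-p)) * key

lemma sum_binEnt_eq (p : ℝ) (hp0 : 0 < p) (hp1 : p < 1) (n : ℕ) :
    ∑ i ∈ Finset.range (n + 2), binEnt ((i : ℝ) / ((n:ℝ) + 1)) * binomPmf (n + 1) p i
      = (∑ k ∈ Finset.range (n+2), binomPmf (n+1) p k * Real.log (((n+1).choose k : ℕ)))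
        - ∑ k ∈ Finset.range (n+1), binomPmf n p k * Real.log ((n.choose k : ℕ)) := by
  rw [Finset.sum_range_succ' (fun i => binEnt ((i : ℝ) / ((n:ℝ) + 1)) * binomPmf (n + 1) p i) (n+1)]
  have h0 : binEnt (((0:ℕ) : ℝ) / ((n:ℝ) + 1)) * binomPmf (n + 1) p 0 = 0 := by
    norm_num [binEnt]
  rw [h0, add_zero]
  have key : ∀ i ∈ Finset.range (n+1),
      binEnt (((i+1 : ℕ) : ℝ) / ((n:ℝ) + 1)) * binomPmf (n + 1) p (i+1)
        = binomPmf (n+1) p (i+1) * Real.log (((n+1).choose (i+1) : ℕ))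
          - p * (binomPmf n p i * Real.log ((n.choose i : ℕ)))
          - (1-p) * (binomPmf n p (i+1) * Real.log ((n.choose (i+1) : ℕ))) := by
    intro i hi
    have hi' : i ≤ n := by have := Finset.mem_range.mp hi; omega
    have := term_eq p hp0 hp1 n i hi'
    push_cast
    push_cast at this
    exact this
  rw [Finset.sum_congr rfl key, Finset.sum_sub_distrib, Finset.sum_sub_distrib]
  have hS1 : ∑ i ∈ Finset.range (n+1),
      binomPmf (n+1) p (i+1) * Real.log (((n+1).choose (i+1) : ℕ))
      = ∑ k ∈ Finset.range (n+2), binomPmf (n+1) p k * Real.log (((n+1).choose k : ℕ)) := by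
    rw [Finset.sum_range_succ' (fun k => binomPmf (n+1) p k * Real.log (((n+1).choose k : ℕ))) (n+1)]
    simp [Nat.choose_zero_right]
  have hS2 : ∑ i ∈ Finset.range (n+1),
      (1-p) * (binomPmf n p (i+1) * Real.log ((n.choose (i+1) : ℕ)))
      = (1-p) * ∑ k ∈ Finset.range (n+1), binomPmf n p k * Real.log ((n.choose k : ℕ)) := by
    rw [← Finset.mul_sum]
    congr 1
    have hA := Finset.sum_range_succ' (fun k => binomPmf n p k * Real.log ((n.choose k : ℕ))) (n+1)
    have hBe := Finset.sum_range_succ (fun k => binomPmf n p k * Real.log ((n.choose k : ℕ))) (n+1)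
    have hz1 : binomPmf n p 0 * Real.log ((n.choose 0 : ℕ)) = 0 := by
      simp [Nat.choose_zero_right]
    have hz2 : binomPmf n p (n+1) * Real.log ((n.choose (n+1) : ℕ)) = 0 := by
      simp [binomPmf, Nat.choose_succ_self]
    simp only [hz1, hz2, add_zero] at hA hBe
    rw [← hA, hBe]
  have hS3 : ∑ i ∈ Finset.range (n+1),
      p * (binomPmf n p i * Real.log ((n.choose i : ℕ)))
      = p * ∑ k ∈ Finset.range (n+1), binomPmf n p k * Real.log ((n.choose k : ℕ)) := by
    rw [Finset.mul_sum]
  rw [hS1, hS2, hS3]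
  ring

theorem binomEnt_diff_eq (p : ℝ) (hp : p ∈ Set.Ioo (0:ℝ) 1) (n : ℕ) (hn : 1 ≤ n) :
    binomEnt (n + 1) p - binomEnt n p =
      binEnt p - ∑ i ∈ Finset.range (n + 2),
        binEnt ((i : ℝ) / (n + 1)) * binomPmf (n + 1) p i := by
  obtain ⟨hp0, hp1⟩ := hp
  rw [binomEnt_eq (n+1) p hp0 hp1, binomEnt_eq n p hp0 hp1,
    show ((n:ℝ) + 1) = (((n+1 : ℕ)):ℝ) by push_cast; ring]
  have := sum_binEnt_eq p hp0 hp1 n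
  push_cast at this ⊢
  rw [this]
  ring
end

section
/- Let P be the law of X^{(n)}+1 and Q be the law of X^{(n)}, where X^{(n)} ~ B(n,p). Then for each i ∈ {0,...,n+1}, |p·P(i) − (1−p)·Q(i)| / (p·P(i) + (1−p)·Q(i)) = |2i − n − 1|/(n+1). -/
open Real

noncomputable def shiftPmf (n : ℕ) (p : ℝ) (i : ℕ) : ℝ :=
  if i = 0 then 0 else binomPmf n p (i - 1)

lemma choose_cast_id (n j : ℕ) (hj : j ≤ n) :
    ((n : ℝ) + 1) * ((n.choose j : ℝ) - n.choose (j+1)) =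
      (2 * (j:ℝ) + 2 - ((n:ℝ) + 1)) * ((n+1).choose (j+1) : ℝ) := by
  have h1 : (n + 1) * n.choose j = (n+1).choose (j+1) * (j + 1) := by
    simpa [Nat.succ_eq_add_one] using Nat.add_one_mul_choose_eq n j
  have h2 : (n+1).choose (j+1) = n.choose j + n.choose (j+1) := by
    rw [Nat.choose_succ_succ]
  have h1' : ((n:ℝ) + 1) * n.choose j = ((n+1).choose (j+1) : ℝ) * ((j:ℝ) + 1) := by
    exact_mod_cast congrArg (Nat.cast (R := ℝ)) h1
  have h2' : ((n+1).choose (j+1) : ℝ) = (n.choose j : ℝ) + n.choose (j+1) := by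
    exact_mod_cast congrArg (Nat.cast (R := ℝ)) h2
  nlinarith [h1', h2']

theorem triangular_ratio (n : ℕ) (p : ℝ) (hp : p ∈ Set.Ioo (0:ℝ) 1)
    (i : ℕ) (hi : i ≤ n + 1) :
    |p * shiftPmf n p i - (1 - p) * binomPmf n p i| /
        (p * shiftPmf n p i + (1 - p) * binomPmf n p i) =
      |2 * (i : ℝ) - n - 1| / (n + 1) := by
  obtain ⟨hp0, hp1⟩ := hp
  have hq0 : (0:ℝ) < 1 - p := by linarith
  rcases i with _ | j
  · -- i = 0
    rw [shiftPmf, if_pos rfl, mul_zero, zero_sub, zero_add]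
    simp only [binomPmf]
    have hpos : (0:ℝ) < (1 - p) * ((n.choose 0 : ℝ) * p ^ 0 * (1 - p) ^ (n - 0)) := by
      simp only [Nat.choose_zero_right, Nat.cast_one, pow_zero, one_mul]
      positivity
    rw [abs_neg, abs_of_pos hpos, div_self (ne_of_gt hpos)]
    rw [abs_of_nonpos (by push_cast; linarith [Nat.cast_nonneg (α := ℝ) n] : 2 * ((0:ℕ):ℝ) - n - 1 ≤ 0)]
    have : (0:ℝ) < (n:ℝ) + 1 := by positivity
    field_simp
    ring
  · -- i = j + 1
    have hj : j ≤ n := by omega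
    rw [shiftPmf, if_neg (Nat.succ_ne_zero j), Nat.add_sub_cancel]
    set a := (n.choose j : ℝ) with ha
    set b := (n.choose (j+1) : ℝ) with hb
    set c := p ^ (j+1) * (1 - p) ^ (n - j) with hc
    have hcpos : 0 < c := by positivity
    have e1 : p * binomPmf n p j = a * c := by
      simp only [binomPmf, hc, pow_succ]; ring
    have e2 : (1 - p) * binomPmf n p (j+1) = b * c := by
      rcases eq_or_lt_of_le hj with rfl | hlt
      · simp [binomPmf, hb, Nat.choose_succ_self]
      · have : n - j = (n - (j+1)) + 1 := by omega
        simp only [binomPmf, hc, this, pow_succ]; ring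
    rw [e1, e2]
    have key := choose_cast_id n j hj
    have h2' : ((n+1).choose (j+1) : ℝ) = a + b := by
      rw [ha, hb]; exact_mod_cast congrArg (Nat.cast (R := ℝ)) (Nat.choose_succ_succ n j)
    rw [h2'] at key
    have habpos : 0 < a + b := by
      rw [← h2']
      exact_mod_cast Nat.choose_pos (by omega : j + 1 ≤ n + 1)
    have hspos : 0 < (a + b) * c := by positivity
    have hstep : a * c - b * c = (a - b) * c := by ring
    have hstep2 : a * c + b * c = (a + b) * c := by ring
    rw [hstep, hstep2, abs_mul, abs_of_pos hcpos, mul_div_mul_right _ _ (ne_of_gt hcpos)]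
    have hn1 : (0:ℝ) < (n:ℝ) + 1 := by positivity
    rw [div_eq_div_iff (ne_of_gt habpos) (by push_cast; linarith : ((n:ℝ)+1) ≠ 0)]
    rw [← ha, ← hb] at key
    have inner : (a - b) * ((n:ℝ) + 1) = (2 * ((j:ℝ)+1) - (n:ℝ) - 1) * (a + b) := by
      linarith [key]
    have : |a - b| * ((n:ℝ) + 1) = |(2 * ((j:ℝ)+1) - n - 1) * (a + b)| := by
      rw [← abs_of_pos hn1, ← abs_mul, inner]
    push_cast
    rw [this, abs_mul, abs_of_pos habpos]
end

section
/- For p ∈ (0,1), n ≥ 1, and any nonnegative integer l, H[B(n+1,p)] − H[B(n,p)] ≥ ∑_{k=1}^{2l+1} F^{(k)}(p) (n+1)^{−k} μ_k^{(n+1)}, where μ_k^{(n+1)} = ∑_{i=0}^{n+1} (i − (n+1)p)^k P_{B(n+1,p)}(i) is the k-th central moment of B(n+1,p), F^{(1)}(p)=log(p/(1−p)) and F^{(k)}(p)=[ (1−p)^{−(k−1)} + (−1)^k p^{−(k−1)} ]/(k(k−1)) for k ≥ 2. -/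
open Real

noncomputable def centralMoment (k n : ℕ) (p : ℝ) : ℝ :=
  ∑ i ∈ Finset.range (n + 1), ((i : ℝ) - n * p) ^ k * binomPmf n p i

noncomputable def Fd (j : ℕ) (x : ℝ) : ℝ :=
  if j = 0 then x * Real.log x + (1 - x) * Real.log (1 - x)
  else if j = 1 then Real.log x - Real.log (1 - x)
  else (Nat.factorial (j - 2) : ℝ) *
    ((-1 : ℝ) ^ j * x ^ (-((j : ℤ) - 1)) + (1 - x) ^ (-((j : ℤ) - 1)))

lemma Fd_zero (x : ℝ) : Fd 0 x = x * Real.log x + (1 - x) * Real.log (1 - x) := rfl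

lemma Fd_one (x : ℝ) : Fd 1 x = Real.log x - Real.log (1 - x) := rfl

lemma Fd_ge2 (j : ℕ) (hj : 2 ≤ j) (x : ℝ) :
    Fd j x = (Nat.factorial (j - 2) : ℝ) *
      ((-1 : ℝ) ^ j * x ^ (-((j : ℤ) - 1)) + (1 - x) ^ (-((j : ℤ) - 1))) := by
  unfold Fd
  rw [if_neg (by omega), if_neg (by omega)]

lemma hasDerivAt_Fd (j : ℕ) (x : ℝ) (hx : 0 < x) (hx1 : x < 1) :
    HasDerivAt (Fd j) (Fd (j + 1) x) x := by
  have hx0 : x ≠ 0 := hx.ne'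
  have h1x : (0:ℝ) < 1 - x := by linarith
  have h1x0 : (1:ℝ) - x ≠ 0 := h1x.ne'
  have hder1x : HasDerivAt (fun y : ℝ => 1 - y) (-1 : ℝ) x := by
    simpa using (hasDerivAt_const x (1:ℝ)).fun_sub (hasDerivAt_id x)
  match j with
  | 0 =>
    have h1 : HasDerivAt (fun y : ℝ => y * Real.log y) (Real.log x + 1) x := by
      have := (hasDerivAt_id x).fun_mul (Real.hasDerivAt_log hx0)
      simpa [mul_inv_cancel₀ hx0, add_comm] using this
    have h2 : HasDerivAt (fun y : ℝ => (1 - y) * Real.log (1 - y))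
        (-(Real.log (1 - x) + 1)) x := by
      have hl : HasDerivAt (fun y : ℝ => Real.log (1 - y)) ((1 - x)⁻¹ * (-1)) x := by
        simpa [Function.comp_def] using (Real.hasDerivAt_log h1x0).comp x hder1x
      have := hder1x.mul hl
      refine this.congr_deriv ?_
      field_simp
      ring
    have hfd : Fd 0 = fun y : ℝ => y * Real.log y + (1 - y) * Real.log (1 - y) := rfl
    rw [hfd, Fd_one]
    have := h1.add h2
    refine this.congr_deriv ?_
    ring
  | 1 =>
    have hl : HasDerivAt (fun y : ℝ => Real.log (1 - y)) ((1 - x)⁻¹ * (-1)) x := by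
      simpa [Function.comp_def] using (Real.hasDerivAt_log h1x0).comp x hder1x
    have hfd : Fd 1 = fun y : ℝ => Real.log y - Real.log (1 - y) := rfl
    rw [hfd, Fd_ge2 2 le_rfl]
    have := (Real.hasDerivAt_log hx0).sub hl
    refine this.congr_deriv ?_
    simp [zpow_neg]
  | (k + 2) =>
    have e1 : HasDerivAt (fun y : ℝ => y ^ (-((k:ℤ) + 1)))
        ((-((k:ℤ) + 1) : ℝ) * x ^ (-((k:ℤ) + 1) - 1)) x := by
      simpa using hasDerivAt_zpow (-((k:ℤ) + 1)) x (Or.inl hx0)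
    have e2 : HasDerivAt (fun y : ℝ => (1 - y) ^ (-((k:ℤ) + 1)))
        (((-((k:ℤ) + 1) : ℝ) * (1 - x) ^ (-((k:ℤ) + 1) - 1)) * (-1)) x := by
      simpa [Function.comp_def] using
        (hasDerivAt_zpow (-((k:ℤ) + 1)) (1 - x) (Or.inl h1x0)).comp x hder1x
    have hfd : Fd (k + 2) = fun y : ℝ => (Nat.factorial k : ℝ) *
        ((-1 : ℝ) ^ (k + 2) * y ^ (-((k:ℤ) + 1)) + (1 - y) ^ (-((k:ℤ) + 1))) := by
      funext y
      rw [Fd_ge2 (k + 2) (by omega)]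
      push_cast
      rw [show -((k:ℤ) + 2 - 1) = -((k:ℤ) + 1) by ring]
    rw [hfd, Fd_ge2 (k + 3) (by omega)]
    have := ((e1.const_mul ((-1:ℝ)^(k+2))).add e2).const_mul ((Nat.factorial k : ℝ))
    refine this.congr_deriv ?_
    have hf : (Nat.factorial (k + 3 - 2) : ℝ) = (k + 1) * Nat.factorial k := by
      rw [show k + 3 - 2 = k + 1 from rfl, Nat.factorial_succ]; push_cast; ring
    rw [hf]
    push_cast
    rw [show -((k:ℤ) + 3 - 1) = -((k:ℤ) + 1) - 1 by ring]
    rw [show ((-1:ℝ)) ^ (k + 3) = -((-1:ℝ)^(k+2)) by rw [pow_succ]; ring]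
    ring

lemma Fd_even_nonneg (l : ℕ) (x : ℝ) (hx : 0 < x) (hx1 : x < 1) :
    0 ≤ Fd (2 * l + 2) x := by
  rw [Fd_ge2 (2 * l + 2) (by omega)]
  have h1x : (0:ℝ) < 1 - x := by linarith
  have : ((-1 : ℝ)) ^ (2 * l + 2) = 1 := by
    rw [show 2 * l + 2 = 2 * (l + 1) by ring, pow_mul]; norm_num
  rw [this]
  positivity

noncomputable def Gfun (p : ℝ) (m j : ℕ) (x : ℝ) : ℝ :=
  Fd j x - ∑ k ∈ Finset.Icc j m,
    (Nat.descFactorial k j : ℝ) * (Fd k p / (Nat.factorial k)) * (x - p) ^ (k - j)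

lemma Gfun_top (p : ℝ) (m j : ℕ) (hj : m < j) (x : ℝ) : Gfun p m j x = Fd j x := by
  unfold Gfun
  rw [Finset.Icc_eq_empty (by omega)]
  simp

lemma Gfun_at_p (p : ℝ) (m j : ℕ) (hj : j ≤ m) : Gfun p m j p = 0 := by
  unfold Gfun
  rw [Finset.sum_eq_single j]
  · rw [Nat.descFactorial_self]
    field_simp
    simp
  · intro k hk hne
    have : 0 < k - j := by
      simp only [Finset.mem_Icc] at hk; omega
    rw [sub_self, zero_pow (by omega)]
    ring
  · intro h
    exact absurd (Finset.mem_Icc.mpr ⟨le_rfl, hj⟩) h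

lemma hasDerivAt_Gfun (p : ℝ) (m j : ℕ) (x : ℝ) (hx : 0 < x) (hx1 : x < 1) :
    HasDerivAt (Gfun p m j) (Gfun p m (j + 1) x) x := by
  have hsum : HasDerivAt
      (fun y : ℝ => ∑ k ∈ Finset.Icc j m,
        (Nat.descFactorial k j : ℝ) * (Fd k p / (Nat.factorial k)) * (y - p) ^ (k - j))
      (∑ k ∈ Finset.Icc (j+1) m,
        (Nat.descFactorial k (j+1) : ℝ) * (Fd k p / (Nat.factorial k)) * (x - p) ^ (k - (j+1))) x := by
    have hterm : ∀ k ∈ Finset.Icc j m, HasDerivAt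
        (fun y : ℝ => (Nat.descFactorial k j : ℝ) * (Fd k p / (Nat.factorial k)) * (y - p) ^ (k - j))
        ((Nat.descFactorial k j : ℝ) * (Fd k p / (Nat.factorial k)) *
          (((k - j : ℕ) : ℝ) * (x - p) ^ (k - j - 1))) x := by
      intro k hk
      have hb : HasDerivAt (fun y : ℝ => (y - p) ^ (k - j))
          (((k - j : ℕ) : ℝ) * (x - p) ^ (k - j - 1)) x := by
        simpa using (((hasDerivAt_id x).sub_const p).fun_pow (k - j))
      exact hb.const_mul _
    have := HasDerivAt.fun_sum hterm
    refine this.congr_deriv ?_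
    rcases le_or_gt j m with hjm | hjm
    · rw [show Finset.Icc j m = insert j (Finset.Icc (j+1) m) by
        rw [Finset.Icc_add_one_left_eq_Ioc, Finset.Ioc_insert_left hjm]]
      rw [Finset.sum_insert (by simp)]
      rw [Nat.sub_self]
      simp only [Nat.cast_zero, zero_mul, mul_zero, zero_add]
      apply Finset.sum_congr rfl
      intro k hk
      have hk1 : j + 1 ≤ k := (Finset.mem_Icc.mp hk).1
      have hdesc : (Nat.descFactorial k (j+1) : ℝ)
          = (Nat.descFactorial k j : ℝ) * ((k : ℝ) - j) := by
        rw [Nat.descFactorial_succ]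
        push_cast [Nat.cast_sub (by omega : j ≤ k)]
        ring
      rw [hdesc, show k - (j+1) = k - j - 1 by omega, Nat.cast_sub (by omega : j ≤ k)]
      ring
    · rw [Finset.Icc_eq_empty (by omega), Finset.Icc_eq_empty (by omega)]
      simp
  have := (hasDerivAt_Fd j x hx hx1).sub hsum
  exact this

lemma convex_step (p : ℝ) (hp0 : 0 < p) (hp1 : p < 1) (g g1 g2 : ℝ → ℝ)
    (hg : ∀ x ∈ Set.Ioo (0:ℝ) 1, HasDerivAt g (g1 x) x)
    (hg1 : ∀ x ∈ Set.Ioo (0:ℝ) 1, HasDerivAt g1 (g2 x) x)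
    (hgp : g p = 0) (hg1p : g1 p = 0)
    (h2 : ∀ x ∈ Set.Ioo (0:ℝ) 1, 0 ≤ g2 x) :
    ∀ x ∈ Set.Ioo (0:ℝ) 1, 0 ≤ g x := by
  have hpI : p ∈ Set.Ioo (0:ℝ) 1 := ⟨hp0, hp1⟩
  -- g1 is monotone on Ioo 0 1
  have hg1mono : MonotoneOn g1 (Set.Ioo (0:ℝ) 1) := by
    apply monotoneOn_of_deriv_nonneg (convex_Ioo 0 1)
    · exact fun x hx => ((hg1 x hx).differentiableAt).continuousAt.continuousWithinAt
    · intro x hx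
      rw [interior_Ioo] at hx
      exact ((hg1 x hx).differentiableAt).differentiableWithinAt
    · intro x hx
      rw [interior_Ioo] at hx
      rw [(hg1 x hx).deriv]
      exact h2 x hx
  intro x hx
  rcases le_total p x with hpx | hpx
  · -- g monotone on Icc p x
    have hsub : Set.Icc p x ⊆ Set.Ioo (0:ℝ) 1 := fun y hy =>
      ⟨lt_of_lt_of_le hp0 hy.1, lt_of_le_of_lt hy.2 hx.2⟩
    have : MonotoneOn g (Set.Icc p x) := by
      apply monotoneOn_of_deriv_nonneg (convex_Icc p x)
      · exact fun y hy => ((hg y (hsub hy)).differentiableAt).continuousAt.continuousWithinAt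
      · intro y hy
        rw [interior_Icc] at hy
        exact ((hg y (hsub ⟨hy.1.le, hy.2.le⟩)).differentiableAt).differentiableWithinAt
      · intro y hy
        rw [interior_Icc] at hy
        have hyI : y ∈ Set.Ioo (0:ℝ) 1 := hsub ⟨hy.1.le, hy.2.le⟩
        rw [(hg y hyI).deriv]
        have := hg1mono hpI hyI hy.1.le
        linarith [hg1p ▸ this]
    have := this ⟨le_rfl, hpx⟩ ⟨hpx, le_rfl⟩ hpx
    linarith [hgp ▸ this]
  · have hsub : Set.Icc x p ⊆ Set.Ioo (0:ℝ) 1 := fun y hy =>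
      ⟨lt_of_lt_of_le hx.1 hy.1, lt_of_le_of_lt hy.2 hp1⟩
    have : AntitoneOn g (Set.Icc x p) := by
      apply antitoneOn_of_deriv_nonpos (convex_Icc x p)
      · exact fun y hy => ((hg y (hsub hy)).differentiableAt).continuousAt.continuousWithinAt
      · intro y hy
        rw [interior_Icc] at hy
        exact ((hg y (hsub ⟨hy.1.le, hy.2.le⟩)).differentiableAt).differentiableWithinAt
      · intro y hy
        rw [interior_Icc] at hy
        have hyI : y ∈ Set.Ioo (0:ℝ) 1 := hsub ⟨hy.1.le, hy.2.le⟩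
        rw [(hg y hyI).deriv]
        have := hg1mono hyI hpI hy.2.le
        linarith [hg1p ▸ this]
    have := this ⟨le_rfl, hpx⟩ ⟨hpx, le_rfl⟩ hpx
    linarith [hgp ▸ this]

lemma Gfun_nonneg_Ioo (p : ℝ) (hp0 : 0 < p) (hp1 : p < 1) (l : ℕ) :
    ∀ x ∈ Set.Ioo (0:ℝ) 1, 0 ≤ Gfun p (2 * l + 1) 0 x := by
  set m := 2 * l + 1 with hm
  have key : ∀ t : ℕ, t ≤ l + 1 → ∀ x ∈ Set.Ioo (0:ℝ) 1,
      0 ≤ Gfun p m (2 * (l + 1 - t)) x := by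
    intro t
    induction t with
    | zero =>
      intro _ x hx
      rw [show 2 * (l + 1 - 0) = m + 1 by omega]
      rw [Gfun_top p m (m+1) (by omega)]
      rw [show m + 1 = 2 * l + 2 by omega]
      exact Fd_even_nonneg l x hx.1 hx.2
    | succ t ih =>
      intro ht x hx
      have hprev := ih (by omega)
      have hj : 2 * (l + 1 - (t+1)) + 2 = 2 * (l + 1 - t) := by omega
      set j := 2 * (l + 1 - (t+1)) with hjdef
      refine convex_step p hp0 hp1 (Gfun p m j) (Gfun p m (j+1)) (Gfun p m (j+2))
        (fun y hy => hasDerivAt_Gfun p m j y hy.1 hy.2)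
        (fun y hy => hasDerivAt_Gfun p m (j+1) y hy.1 hy.2)
        (Gfun_at_p p m j (by omega))
        (Gfun_at_p p m (j+1) (by omega))
        (fun y hy => by rw [show j + 2 = 2 * (l + 1 - t) by omega]; exact hprev y hy)
        x hx
  have := key (l + 1) le_rfl
  simpa using this

lemma continuous_Gfun0 (p : ℝ) (m : ℕ) : Continuous (Gfun p m 0) := by
  unfold Gfun
  apply Continuous.sub
  · have h1 : Continuous fun x : ℝ => x * Real.log x := Real.continuous_mul_log
    have h2 : Continuous fun x : ℝ => (1 - x) * Real.log (1 - x) :=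
      h1.comp (continuous_const.sub continuous_id)
    have : Fd 0 = fun x : ℝ => x * Real.log x + (1 - x) * Real.log (1 - x) := rfl
    rw [this]
    exact h1.add h2
  · apply continuous_finset_sum
    intro k _
    exact continuous_const.mul ((continuous_id.sub continuous_const).pow _)

lemma Gfun_nonneg_Icc (p : ℝ) (hp0 : 0 < p) (hp1 : p < 1) (l : ℕ) :
    ∀ x ∈ Set.Icc (0:ℝ) 1, 0 ≤ Gfun p (2 * l + 1) 0 x := by
  intro x hx
  have hcont := (continuous_Gfun0 p (2 * l + 1)).continuousWithinAt
    (s := Set.Ioo (0:ℝ) 1) (x := x)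
  have hne : (Set.Ioo (0:ℝ) 1).Nonempty := ⟨1/2, by norm_num⟩
  have hclo : x ∈ closure (Set.Ioo (0:ℝ) 1) := by
    rw [closure_Ioo (by norm_num : (0:ℝ) ≠ 1)]
    exact hx
  have hNeBot : (nhdsWithin x (Set.Ioo (0:ℝ) 1)).NeBot :=
    mem_closure_iff_nhdsWithin_neBot.mp hclo
  refine ge_of_tendsto hcont ?_
  filter_upwards [self_mem_nhdsWithin] with y hy
  exact Gfun_nonneg_Ioo p hp0 hp1 l y hy

lemma sum_pmf (p : ℝ) (n : ℕ) : ∑ i ∈ Finset.range (n + 1), binomPmf n p i = 1 := by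
  calc ∑ i ∈ Finset.range (n+1), binomPmf n p i
      = ∑ i ∈ Finset.range (n+1), p ^ i * (1-p) ^ (n-i) * (n.choose i : ℝ) := by
        apply Finset.sum_congr rfl; intro i _; unfold binomPmf; ring
    _ = (p + (1-p))^n := (add_pow p (1-p) n).symm
    _ = 1 := by norm_num

lemma pmf_nonneg (p : ℝ) (hp0 : 0 < p) (hp1 : p < 1) (n i : ℕ) : 0 ≤ binomPmf n p i := by
  unfold binomPmf
  have h1 : (0:ℝ) < 1 - p := by linarith
  positivity

lemma pmf_pos (p : ℝ) (hp0 : 0 < p) (hp1 : p < 1) (n i : ℕ) (hi : i ≤ n) :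
    0 < binomPmf n p i := by
  unfold binomPmf
  have h1 : (0:ℝ) < 1 - p := by linarith
  have h2 := Nat.choose_pos hi
  positivity

lemma pmf_succ_split (p : ℝ) (n j : ℕ) (hj : j ≤ n) :
    binomPmf (n+1) p (j+1) = p * binomPmf n p j + (1 - p) * binomPmf n p (j+1) := by
  unfold binomPmf
  rcases eq_or_lt_of_le hj with rfl | hlt
  · rw [Nat.choose_succ_succ, Nat.choose_succ_self]
    push_cast
    simp [Nat.sub_self]
    ring
  · have h2 : n - j = (n - (j+1)) + 1 := by omega
    rw [Nat.choose_succ_succ]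
    push_cast
    rw [h2, pow_succ]
    ring

lemma pascal_sum (p : ℝ) (n : ℕ) (g : ℕ → ℝ) :
    ∑ i ∈ Finset.range (n + 2), binomPmf (n+1) p i * g i
      = ∑ i ∈ Finset.range (n + 1),
          (p * binomPmf n p i * g (i+1) + (1 - p) * binomPmf n p i * g i) := by
  rw [Finset.sum_range_succ']
  have hsplit : ∀ j ∈ Finset.range (n+1), binomPmf (n+1) p (j+1) * g (j+1)
      = p * binomPmf n p j * g (j+1) + (1-p) * binomPmf n p (j+1) * g (j+1) := by
    intro j hj
    rw [pmf_succ_split p n j (by simp at hj; omega)]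
    ring
  rw [Finset.sum_congr rfl hsplit, Finset.sum_add_distrib]
  have hB : (∑ j ∈ Finset.range (n+1), (1-p) * binomPmf n p (j+1) * g (j+1))
      + binomPmf (n+1) p 0 * g 0
      = ∑ i ∈ Finset.range (n+1), (1-p) * binomPmf n p i * g i := by
    have h0 : binomPmf (n+1) p 0 * g 0 = (1-p) * binomPmf n p 0 * g 0 := by
      unfold binomPmf
      simp only [Nat.choose_zero_right, Nat.cast_one, pow_zero, Nat.sub_zero]
      rw [pow_succ]
      ring
    rw [h0, ← Finset.sum_range_succ' (fun i => (1-p) * binomPmf n p i * g i) (n+1)]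
    rw [Finset.sum_range_succ]
    have : binomPmf n p (n+1) = 0 := by
      unfold binomPmf
      rw [Nat.choose_succ_self]
      simp
    rw [this]
    ring
  rw [add_assoc, hB, Finset.sum_add_distrib]

lemma mean_pmf (p : ℝ) (n : ℕ) :
    ∑ i ∈ Finset.range (n + 1), (i : ℝ) * binomPmf n p i = n * p := by
  induction n with
  | zero => simp
  | succ n ih =>
    have h := pascal_sum p n (fun i => (i : ℝ))
    have h2 : ∑ i ∈ Finset.range (n + 2), (i:ℝ) * binomPmf (n+1) p i
        = ∑ i ∈ Finset.range (n+1), ((i:ℝ) * binomPmf n p i + p * binomPmf n p i) := by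
      rw [show (∑ i ∈ Finset.range (n + 2), (i:ℝ) * binomPmf (n+1) p i)
          = ∑ i ∈ Finset.range (n + 2), binomPmf (n+1) p i * (fun i => (i:ℝ)) i by
            apply Finset.sum_congr rfl; intro i _; ring, h]
      apply Finset.sum_congr rfl
      intro i _
      push_cast
      ring
    rw [show n + 1 + 1 = n + 2 from rfl, h2, Finset.sum_add_distrib, ih,
      ← Finset.mul_sum, sum_pmf]
    push_cast
    ring

lemma ent_formula (p : ℝ) (hp0 : 0 < p) (hp1 : p < 1) (n : ℕ) :
    binomEnt n p = n * binEnt p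
      - ∑ i ∈ Finset.range (n + 1), binomPmf n p i * Real.log (n.choose i) := by
  have h1p : (0:ℝ) < 1 - p := by linarith
  unfold binomEnt
  have hterm : ∀ i ∈ Finset.range (n+1),
      binomPmf n p i * Real.log (binomPmf n p i)
      = binomPmf n p i * Real.log (n.choose i)
        + ((i:ℝ) * binomPmf n p i) * Real.log p
        + (((n:ℝ) - i) * binomPmf n p i) * Real.log (1 - p) := by
    intro i hi
    simp only [Finset.mem_range] at hi
    have hi' : i ≤ n := by omega
    have hC : (0:ℝ) < (n.choose i : ℝ) := by exact_mod_cast Nat.choose_pos hi'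
    have hlog : Real.log (binomPmf n p i)
        = Real.log (n.choose i) + (i:ℝ) * Real.log p + ((n:ℝ) - i) * Real.log (1 - p) := by
      unfold binomPmf
      rw [Real.log_mul (by positivity) (by positivity),
          Real.log_mul (by positivity) (by positivity),
          Real.log_pow, Real.log_pow]
      rw [Nat.cast_sub hi']
    rw [hlog]
    ring
  rw [Finset.sum_congr rfl hterm, Finset.sum_add_distrib, Finset.sum_add_distrib]
  have e1 : ∑ i ∈ Finset.range (n+1), ((i:ℝ) * binomPmf n p i) * Real.log p
      = (n * p) * Real.log p := by
    rw [← Finset.sum_mul, mean_pmf]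
  have e2 : ∑ i ∈ Finset.range (n+1), (((n:ℝ) - i) * binomPmf n p i) * Real.log (1 - p)
      = (n * (1 - p)) * Real.log (1 - p) := by
    rw [← Finset.sum_mul]
    have : ∑ i ∈ Finset.range (n+1), ((n:ℝ) - i) * binomPmf n p i
        = n * (1 - p) := by
      have : ∑ i ∈ Finset.range (n+1), ((n:ℝ) - i) * binomPmf n p i
          = (n:ℝ) * (∑ i ∈ Finset.range (n+1), binomPmf n p i)
            - ∑ i ∈ Finset.range (n+1), (i:ℝ) * binomPmf n p i := by
        rw [Finset.mul_sum, ← Finset.sum_sub_distrib]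
        apply Finset.sum_congr rfl
        intro i _
        ring
      rw [this, sum_pmf, mean_pmf]
      ring
    rw [this]
  rw [e1, e2]
  unfold binEnt
  ring

lemma logC_rec (p : ℝ) (hp0 : 0 < p) (hp1 : p < 1) (n : ℕ) :
    ∑ i ∈ Finset.range (n + 2), binomPmf (n+1) p i * Real.log ((n+1).choose i)
    = ∑ i ∈ Finset.range (n + 1), binomPmf n p i * Real.log (n.choose i)
      + Real.log ((n:ℝ) + 1)
      - ∑ i ∈ Finset.range (n + 1),
          (p * binomPmf n p i * Real.log ((i:ℝ)+1)
            + (1-p) * binomPmf n p i * Real.log ((n:ℝ)+1-i)) := by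
  rw [pascal_sum p n (fun i => Real.log ((n+1).choose i))]
  have hterm : ∀ i ∈ Finset.range (n+1),
      (p * binomPmf n p i * Real.log ((n+1).choose (i+1))
        + (1-p) * binomPmf n p i * Real.log ((n+1).choose i))
      = (binomPmf n p i * Real.log (n.choose i) + binomPmf n p i * Real.log ((n:ℝ)+1))
        - (p * binomPmf n p i * Real.log ((i:ℝ)+1)
            + (1-p) * binomPmf n p i * Real.log ((n:ℝ)+1-i)) := by
    intro i hi
    simp only [Finset.mem_range] at hi
    have hi' : i ≤ n := by omega
    have hCpos : (0:ℝ) < (n.choose i : ℝ) := by exact_mod_cast Nat.choose_pos hi'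
    have hl1 : Real.log ((n+1).choose (i+1))
        = Real.log ((n:ℝ)+1) + Real.log (n.choose i) - Real.log ((i:ℝ)+1) := by
      have hid : ((n:ℝ)+1) * (n.choose i : ℝ) = ((n+1).choose (i+1) : ℝ) * ((i:ℝ)+1) := by
        have := Nat.add_one_mul_choose_eq n i
        have : ((n+1) * (n.choose i) : ℕ) = ((n+1).choose (i+1)) * (i+1) := by
          simpa [Nat.succ_eq_add_one] using this
        exact_mod_cast congrArg (fun t : ℕ => (t : ℝ)) this
      have h1 : Real.log (((n:ℝ)+1) * (n.choose i : ℝ))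
          = Real.log ((n:ℝ)+1) + Real.log (n.choose i) := by
        rw [Real.log_mul (by positivity) (by positivity)]
      have h2 : Real.log (((n+1).choose (i+1) : ℝ) * ((i:ℝ)+1))
          = Real.log ((n+1).choose (i+1)) + Real.log ((i:ℝ)+1) := by
        have hC2 : (0:ℝ) < ((n+1).choose (i+1) : ℝ) := by
          exact_mod_cast Nat.choose_pos (by omega : i + 1 ≤ n + 1)
        rw [Real.log_mul (by positivity) (by positivity)]
      rw [hid] at h1
      rw [h2] at h1
      linarith
    have hl2 : Real.log ((n+1).choose i)
        = Real.log ((n:ℝ)+1) + Real.log (n.choose i) - Real.log ((n:ℝ)+1-i) := by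
      have hid : (n.choose i : ℝ) * ((n:ℝ)+1) = ((n+1).choose i : ℝ) * ((n:ℝ)+1-i) := by
        have h := Nat.choose_mul_succ_eq n i
        have hcast : ((n.choose i * (n+1) : ℕ) : ℝ) = (((n+1).choose i * (n+1-i) : ℕ) : ℝ) := by
          exact_mod_cast congrArg (fun t : ℕ => (t : ℝ)) h
        rw [Nat.cast_mul, Nat.cast_mul, Nat.cast_sub (by omega : i ≤ n + 1)] at hcast
        push_cast at hcast ⊢
        linarith [hcast]
      have hC2 : (0:ℝ) < ((n+1).choose i : ℝ) := by
        exact_mod_cast Nat.choose_pos (by omega : i ≤ n + 1)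
      have hni : (0:ℝ) < (n:ℝ)+1-i := by
        have : (i:ℝ) ≤ n := by exact_mod_cast hi'
        linarith
      have h1 : Real.log ((n.choose i : ℝ) * ((n:ℝ)+1))
          = Real.log (n.choose i) + Real.log ((n:ℝ)+1) := by
        rw [Real.log_mul (by positivity) (by positivity)]
      have h2 : Real.log (((n+1).choose i : ℝ) * ((n:ℝ)+1-i))
          = Real.log ((n+1).choose i) + Real.log ((n:ℝ)+1-i) := by
        rw [Real.log_mul (by positivity) (by positivity)]
      rw [hid] at h1
      rw [h2] at h1
      linarith
    rw [hl1, hl2]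
    ring
  rw [Finset.sum_congr rfl hterm, Finset.sum_sub_distrib, Finset.sum_add_distrib,
    ← Finset.sum_mul, sum_pmf, one_mul]

lemma shift1 (p : ℝ) (n : ℕ) :
    ∑ i ∈ Finset.range (n + 1), p * binomPmf n p i * Real.log ((i:ℝ)+1)
    = ∑ i ∈ Finset.range (n + 2), ((i:ℝ)/((n:ℝ)+1)) * binomPmf (n+1) p i * Real.log i := by
  rw [Finset.sum_range_succ' (fun i => ((i:ℝ)/((n:ℝ)+1)) * binomPmf (n+1) p i * Real.log i) (n+1)]
  simp only [Nat.cast_zero, zero_div, zero_mul]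
  rw [add_zero]
  apply Finset.sum_congr rfl
  intro j hj
  simp only [Finset.mem_range] at hj
  have hid : (((j:ℝ)+1)/((n:ℝ)+1)) * ((n+1).choose (j+1) : ℝ) = (n.choose j : ℝ) := by
    have h := Nat.add_one_mul_choose_eq n j
    have hcast : ((n:ℝ)+1) * (n.choose j : ℝ) = ((n+1).choose (j+1) : ℝ) * ((j:ℝ)+1) := by
      exact_mod_cast congrArg (fun t : ℕ => (t : ℝ)) h
    have hne : ((n:ℝ)+1) ≠ 0 := by positivity
    field_simp
    linarith [hcast]
  unfold binomPmf
  push_cast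
  calc p * ((n.choose j : ℝ) * p ^ j * (1-p) ^ (n-j)) * Real.log ((j:ℝ)+1)
      = ((((j:ℝ)+1)/((n:ℝ)+1)) * ((n+1).choose (j+1) : ℝ)) * p ^ (j+1) * (1-p)^(n-j)
        * Real.log ((j:ℝ)+1) := by rw [hid]; rw [pow_succ]; ring
    _ = ((j:ℝ)+1)/((n:ℝ)+1) * (((n+1).choose (j+1) : ℝ) * p ^ (j+1) * (1-p)^(n-j))
        * Real.log ((j:ℝ)+1) := by ring

lemma shift2 (p : ℝ) (n : ℕ) :
    ∑ i ∈ Finset.range (n + 1), (1-p) * binomPmf n p i * Real.log ((n:ℝ)+1-i)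
    = ∑ i ∈ Finset.range (n + 2),
        (((n:ℝ)+1-i)/((n:ℝ)+1)) * binomPmf (n+1) p i * Real.log ((n:ℝ)+1-i) := by
  rw [Finset.sum_range_succ
    (fun i => (((n:ℝ)+1-i)/((n:ℝ)+1)) * binomPmf (n+1) p i * Real.log ((n:ℝ)+1-i)) (n+1)]
  have hlast : (((n:ℝ)+1-((n+1:ℕ):ℝ))/((n:ℝ)+1)) * binomPmf (n+1) p (n+1)
      * Real.log ((n:ℝ)+1-((n+1:ℕ):ℝ)) = 0 := by
    push_cast
    simp [sub_self]
  rw [hlast, add_zero]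
  apply Finset.sum_congr rfl
  intro i hi
  simp only [Finset.mem_range] at hi
  have hi' : i ≤ n := by omega
  have hid : (((n:ℝ)+1-i)/((n:ℝ)+1)) * ((n+1).choose i : ℝ) = (n.choose i : ℝ) := by
    have h := Nat.choose_mul_succ_eq n i
    have hcast : (n.choose i : ℝ) * ((n:ℝ)+1) = ((n+1).choose i : ℝ) * ((n:ℝ)+1-i) := by
      have hc : ((n.choose i * (n+1) : ℕ) : ℝ) = (((n+1).choose i * (n+1-i) : ℕ) : ℝ) := by
        exact_mod_cast congrArg (fun t : ℕ => (t : ℝ)) h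
      rw [Nat.cast_mul, Nat.cast_mul, Nat.cast_sub (by omega : i ≤ n + 1)] at hc
      push_cast at hc ⊢
      linarith [hc]
    have hne : ((n:ℝ)+1) ≠ 0 := by positivity
    field_simp
    linarith [hcast]
  have hexp : n + 1 - i = (n - i) + 1 := by omega
  unfold binomPmf
  rw [hexp, pow_succ]
  calc (1-p) * ((n.choose i : ℝ) * p ^ i * (1-p) ^ (n-i)) * Real.log ((n:ℝ)+1-i)
      = ((((n:ℝ)+1-i)/((n:ℝ)+1)) * ((n+1).choose i : ℝ)) * p ^ i * ((1-p)^(n-i) * (1-p))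
        * Real.log ((n:ℝ)+1-i) := by rw [hid]; ring
    _ = (((n:ℝ)+1-i)/((n:ℝ)+1)) * (((n+1).choose i : ℝ) * p ^ i * ((1-p)^(n-i) * (1-p)))
        * Real.log ((n:ℝ)+1-i) := by ring

lemma ent_identity (p : ℝ) (hp0 : 0 < p) (hp1 : p < 1) (n : ℕ) :
    binomEnt (n+1) p - binomEnt n p
    = ∑ i ∈ Finset.range (n + 2), binomPmf (n+1) p i * Fd 0 ((i:ℝ)/((n:ℝ)+1))
      - Fd 0 p := by
  have hnn : (0:ℝ) < (n:ℝ) + 1 := by positivity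
  have hFdterm : ∀ i ∈ Finset.range (n+2),
      binomPmf (n+1) p i * Fd 0 ((i:ℝ)/((n:ℝ)+1))
      = ((i:ℝ)/((n:ℝ)+1)) * binomPmf (n+1) p i * Real.log i
        + (((n:ℝ)+1-i)/((n:ℝ)+1)) * binomPmf (n+1) p i * Real.log ((n:ℝ)+1-i)
        - binomPmf (n+1) p i * Real.log ((n:ℝ)+1) := by
    intro i hi
    simp only [Finset.mem_range] at hi
    have hi' : i ≤ n + 1 := by omega
    have h1 : ((i:ℝ)/((n:ℝ)+1)) * Real.log ((i:ℝ)/((n:ℝ)+1))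
        = ((i:ℝ)/((n:ℝ)+1)) * Real.log i - ((i:ℝ)/((n:ℝ)+1)) * Real.log ((n:ℝ)+1) := by
      rcases Nat.eq_zero_or_pos i with rfl | hipos
      · simp
      · have : (0:ℝ) < i := by exact_mod_cast hipos
        rw [Real.log_div (by positivity) (by positivity)]
        ring
    have h2 : (1 - (i:ℝ)/((n:ℝ)+1)) * Real.log (1 - (i:ℝ)/((n:ℝ)+1))
        = (((n:ℝ)+1-i)/((n:ℝ)+1)) * Real.log ((n:ℝ)+1-i)
          - (((n:ℝ)+1-i)/((n:ℝ)+1)) * Real.log ((n:ℝ)+1) := by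
      have hrw : 1 - (i:ℝ)/((n:ℝ)+1) = ((n:ℝ)+1-i)/((n:ℝ)+1) := by
        field_simp
      rw [hrw]
      rcases eq_or_lt_of_le hi' with heq | hlt
      · subst heq
        push_cast
        simp [sub_self]
      · have : (i:ℝ) < (n:ℝ) + 1 := by exact_mod_cast hlt
        have hpos : (0:ℝ) < (n:ℝ)+1-i := by linarith
        rw [Real.log_div (by positivity) (by positivity)]
        ring
    have hFd : Fd 0 ((i:ℝ)/((n:ℝ)+1))
        = ((i:ℝ)/((n:ℝ)+1)) * Real.log ((i:ℝ)/((n:ℝ)+1))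
          + (1 - (i:ℝ)/((n:ℝ)+1)) * Real.log (1 - (i:ℝ)/((n:ℝ)+1)) := Fd_zero _
    rw [hFd, h1, h2]
    have hne : ((n:ℝ)+1) ≠ 0 := by positivity
    field_simp
    ring
  rw [Finset.sum_congr rfl hFdterm]
  rw [Finset.sum_sub_distrib, Finset.sum_add_distrib, ← Finset.sum_mul, sum_pmf, one_mul]
  rw [← shift1 p n, ← shift2 p n]
  rw [ent_formula p hp0 hp1 (n+1), ent_formula p hp0 hp1 n]
  rw [logC_rec p hp0 hp1 n]
  rw [Finset.sum_add_distrib]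
  have hFdp : Fd 0 p = -binEnt p := by
    rw [Fd_zero]
    unfold binEnt
    ring
  rw [hFdp]
  push_cast
  ring

lemma Fcoef_eq (p : ℝ) (hp0 : 0 < p) (hp1 : p < 1) (k : ℕ) (hk : 1 ≤ k) :
    Fcoef k p = Fd k p / (Nat.factorial k) := by
  have h1p : (0:ℝ) < 1 - p := by linarith
  match k with
  | 1 =>
    unfold Fcoef
    rw [if_pos rfl, Fd_one]
    rw [Real.log_div hp0.ne' h1p.ne']
    norm_num
  | (j+2) =>
    unfold Fcoef
    rw [if_neg (by omega), Fd_ge2 (j+2) (by omega), show j + 2 - 2 = j from rfl]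
    have hfact : (Nat.factorial (j+2) : ℝ) = ((j:ℝ)+2) * ((j:ℝ)+1) * (Nat.factorial j) := by
      rw [Nat.factorial_succ, Nat.factorial_succ]
      push_cast
      ring
    rw [hfact]
    have hj2 : ((j:ℝ)+2) ≠ 0 := by positivity
    have hj1 : ((j:ℝ)+1) ≠ 0 := by positivity
    have hjf : (Nat.factorial j : ℝ) ≠ 0 := by positivity
    have hden : ((j+2:ℕ):ℝ) * (((j+2:ℕ):ℝ) - 1) = ((j:ℝ)+2) * ((j:ℝ)+1) := by
      push_cast
      ring
    rw [hden]
    field_simp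
    ring

lemma Gfun0_eq (p : ℝ) (hp0 : 0 < p) (hp1 : p < 1) (m : ℕ) (x : ℝ) :
    Gfun p m 0 x = Fd 0 x - Fd 0 p - ∑ k ∈ Finset.Icc 1 m, Fcoef k p * (x - p) ^ k := by
  unfold Gfun
  rw [show Finset.Icc 0 m = insert 0 (Finset.Icc 1 m) by
    rw [show (1:ℕ) = 0 + 1 from rfl, Finset.Icc_add_one_left_eq_Ioc, Finset.Ioc_insert_left (Nat.zero_le m)]]
  rw [Finset.sum_insert (by simp)]
  have h0 : (Nat.descFactorial 0 0 : ℝ) * (Fd 0 p / (Nat.factorial 0)) * (x - p) ^ (0 - 0)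
      = Fd 0 p := by
    simp
  rw [h0]
  have hcongr : ∀ k ∈ Finset.Icc 1 m,
      (Nat.descFactorial k 0 : ℝ) * (Fd k p / (Nat.factorial k)) * (x - p) ^ (k - 0)
      = Fcoef k p * (x - p) ^ k := by
    intro k hk
    simp only [Finset.mem_Icc] at hk
    rw [Nat.descFactorial_zero, ← Fcoef_eq p hp0 hp1 k hk.1]
    simp
  rw [Finset.sum_congr rfl hcongr]
  ring

theorem binomEnt_diff_ge_taylor (p : ℝ) (hp : p ∈ Set.Ioo (0:ℝ) 1) (n : ℕ) (hn : 1 ≤ n)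
    (l : ℕ) :
    binomEnt (n + 1) p - binomEnt n p ≥
      ∑ k ∈ Finset.Icc 1 (2 * l + 1),
        Fcoef k p * centralMoment k (n + 1) p / ((n : ℝ) + 1) ^ k := by
  obtain ⟨hp0, hp1⟩ := hp
  have hnn : (0:ℝ) < (n:ℝ) + 1 := by positivity
  set m := 2 * l + 1 with hm
  rw [ge_iff_le, ← sub_nonneg]
  have hRHS : ∑ k ∈ Finset.Icc 1 m, Fcoef k p * centralMoment k (n+1) p / ((n:ℝ)+1) ^ k
      = ∑ i ∈ Finset.range (n+2), binomPmf (n+1) p i *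
          (∑ k ∈ Finset.Icc 1 m, Fcoef k p * ((i:ℝ)/((n:ℝ)+1) - p) ^ k) := by
    have hk : ∀ k ∈ Finset.Icc 1 m,
        Fcoef k p * centralMoment k (n+1) p / ((n:ℝ)+1) ^ k
        = ∑ i ∈ Finset.range (n+2),
            Fcoef k p * (((i:ℝ)/((n:ℝ)+1) - p) ^ k * binomPmf (n+1) p i) := by
      intro k _
      unfold centralMoment
      rw [mul_comm (Fcoef k p), Finset.sum_mul, Finset.sum_div]
      push_cast
      apply Finset.sum_congr rfl
      intro i _
      have hbase : ((i:ℝ) - ((n:ℝ)+1) * p) / ((n:ℝ)+1) = (i:ℝ)/((n:ℝ)+1) - p := by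
        field_simp
      rw [show ((i:ℝ) - ((n:ℝ)+1) * p) ^ k * binomPmf (n+1) p i * Fcoef k p / ((n:ℝ)+1) ^ k
          = (((i:ℝ) - ((n:ℝ)+1) * p) / ((n:ℝ)+1)) ^ k * binomPmf (n+1) p i * Fcoef k p by
        rw [div_pow]; ring]
      rw [hbase]
      ring
    rw [Finset.sum_congr rfl hk, Finset.sum_comm]
    apply Finset.sum_congr rfl
    intro i _
    rw [Finset.mul_sum]
    apply Finset.sum_congr rfl
    intro k _
    ring
  rw [hRHS, ent_identity p hp0 hp1 n]
  have hFdp : Fd 0 p = ∑ i ∈ Finset.range (n+2), binomPmf (n+1) p i * Fd 0 p := by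
    rw [← Finset.sum_mul, sum_pmf, one_mul]
  have hkey : (∑ i ∈ Finset.range (n+2), binomPmf (n+1) p i * Fd 0 ((i:ℝ)/((n:ℝ)+1)))
      - Fd 0 p
      - ∑ i ∈ Finset.range (n+2), binomPmf (n+1) p i *
          (∑ k ∈ Finset.Icc 1 m, Fcoef k p * ((i:ℝ)/((n:ℝ)+1) - p) ^ k)
      = ∑ i ∈ Finset.range (n+2), binomPmf (n+1) p i * Gfun p m 0 ((i:ℝ)/((n:ℝ)+1)) := by
    rw [hFdp, ← Finset.sum_sub_distrib, ← Finset.sum_sub_distrib]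
    apply Finset.sum_congr rfl
    intro i _
    rw [Gfun0_eq p hp0 hp1 m ((i:ℝ)/((n:ℝ)+1))]
    ring
  rw [hkey]
  apply Finset.sum_nonneg
  intro i hi
  simp only [Finset.mem_range] at hi
  have hx : (i:ℝ)/((n:ℝ)+1) ∈ Set.Icc (0:ℝ) 1 := by
    constructor
    · positivity
    · rw [div_le_one hnn]
      have : (i:ℝ) ≤ (n:ℝ) + 1 := by exact_mod_cast (by omega : i ≤ n + 1)
      linarith
  exact mul_nonneg (pmf_nonneg p hp0 hp1 (n+1) i)
    (Gfun_nonneg_Icc p hp0 hp1 l _ hx)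
end
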